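/- arXiv:math/0607446 — 3 statements merged into one kernel-verified Lean document; each statement's English description precedes it below -/
import Mathlib

section
/- The Gegenbauer kernel is positive semidefinite on the sphere: for every n ≥ 2, every degree i ≥ 0, and every finite collection of points x₁,…,x_k ∈ S^{n−1} and reals t₁,…,t_k, we have ∑_{a,b} t_a t_b C_i^{n/2−1}(⟨x_a, x_b⟩) ≥ 0. -/
open Polynomial
open scoped RealInnerProductSpace

/-- The Gegenbauer (ultraspherical) polynomials `C_i^λ`, with `C₀ = 1`, `C₁ = 2λt`, and
`i C_i(t) = 2(i+λ-1) t C_{i-1}(t) - (i+2λ-2) C_{i-2}(t)`. -/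
noncomputable def gegenbauer (lam : ℝ) : ℕ → Polynomial ℝ
  | 0 => 1
  | 1 => C (2 * lam) * X
  | (i + 2) =>
      C (2 * ((i : ℝ) + 2 + lam - 1) / ((i : ℝ) + 2)) * X * gegenbauer lam (i + 1)
        - C (((i : ℝ) + 2 + 2 * lam - 2) / ((i : ℝ) + 2)) * gegenbauer lam i

namespace Geg

local notation "MC" => MvPolynomial.C
local notation "MX" => MvPolynomial.X

lemma two_step {P : ℕ → Prop} (h0 : P 0) (h1 : P 1)
    (hstep : ∀ i, P i → P (i+1) → P (i+2)) : ∀ i, P i := by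
  have key : ∀ i, P i ∧ P (i+1) := by
    intro i
    induction i with
    | zero => exact ⟨h0, h1⟩
    | succ k ih => exact ⟨ih.2, hstep k ih.1 ih.2⟩
  exact fun i => (key i).1

variable {n : ℕ}

noncomputable def Lf (z : Fin n → ℝ) : MvPolynomial (Fin n) ℝ := ∑ j, MC (z j) * MX j

noncomputable def Qf (n : ℕ) : MvPolynomial (Fin n) ℝ := ∑ j : Fin n, MX j ^ 2

noncomputable def F (lam : ℝ) (z : Fin n → ℝ) : ℕ → MvPolynomial (Fin n) ℝ
  | 0 => 1
  | 1 => MC (2 * lam) * Lf z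
  | (i + 2) =>
      MC (2 * ((i : ℝ) + 2 + lam - 1) / ((i : ℝ) + 2)) * (Lf z * F lam z (i + 1))
        - MC (((i : ℝ) + 2 + 2 * lam - 2) / ((i : ℝ) + 2)) * (Qf n * F lam z i)

lemma F_rec (lam : ℝ) (z : Fin n → ℝ) (i : ℕ) :
    MC ((i : ℝ) + 2) * F lam z (i + 2)
      = MC (2 * ((i : ℝ) + 1 + lam)) * (Lf z * F lam z (i + 1))
        - MC ((i : ℝ) + 2 * lam) * (Qf n * F lam z i) := by
  have h2 : ((i : ℝ) + 2) ≠ 0 := by positivity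
  rw [show F lam z (i+2) = MC (2 * ((i : ℝ) + 2 + lam - 1) / ((i : ℝ) + 2)) * (Lf z * F lam z (i + 1))
        - MC (((i : ℝ) + 2 + 2 * lam - 2) / ((i : ℝ) + 2)) * (Qf n * F lam z i) from rfl]
  have e1 : ((i : ℝ) + 2) * (2 * ((i : ℝ) + 2 + lam - 1) / ((i : ℝ) + 2)) = 2 * ((i : ℝ) + 1 + lam) := by
    field_simp; ring
  have e2 : ((i : ℝ) + 2) * (((i : ℝ) + 2 + 2 * lam - 2) / ((i : ℝ) + 2)) = (i : ℝ) + 2 * lam := by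
    field_simp; ring
  rw [mul_sub, ← mul_assoc, ← mul_assoc, ← MvPolynomial.C_mul, e1, ← mul_assoc,
    ← MvPolynomial.C_mul, e2, mul_assoc]

lemma geg_eval_rec (lam : ℝ) (i : ℕ) (t : ℝ) :
    ((i : ℝ) + 2) * (gegenbauer lam (i + 2)).eval t
      = 2 * ((i : ℝ) + 1 + lam) * (t * (gegenbauer lam (i + 1)).eval t)
        - ((i : ℝ) + 2 * lam) * (gegenbauer lam i).eval t := by
  have h2 : ((i : ℝ) + 2) ≠ 0 := by positivity
  rw [show gegenbauer lam (i+2) = Polynomial.C (2 * ((i : ℝ) + 2 + lam - 1) / ((i : ℝ) + 2)) * Polynomial.X * gegenbauer lam (i + 1)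
        - Polynomial.C (((i : ℝ) + 2 + 2 * lam - 2) / ((i : ℝ) + 2)) * gegenbauer lam i from rfl]
  simp only [Polynomial.eval_sub, Polynomial.eval_mul, Polynomial.eval_C, Polynomial.eval_X]
  field_simp
  ring

lemma eval_Lf (z x : Fin n → ℝ) :
    MvPolynomial.eval x (Lf z) = ∑ j, x j * z j := by
  simp [Lf, mul_comm]

lemma eval_Qf (x : Fin n → ℝ) : MvPolynomial.eval x (Qf n) = ∑ j, x j ^ 2 := by
  simp [Qf]

lemma eval_F (lam : ℝ) (z x : Fin n → ℝ) (hx : ∑ j, x j ^ 2 = 1) :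
    ∀ i, MvPolynomial.eval x (F lam z i) = (gegenbauer lam i).eval (∑ j, x j * z j) := by
  apply two_step
  · simp [F, gegenbauer]
  · simp [F, gegenbauer, eval_Lf]
  · intro i ih1 ih2
    have h := congrArg (MvPolynomial.eval x) (F_rec lam z i)
    simp only [map_mul, map_sub, MvPolynomial.eval_C, eval_Lf, eval_Qf, hx, one_mul, ih1, ih2] at h
    have h2 : ((i : ℝ) + 2) ≠ 0 := by positivity
    apply mul_left_cancel₀ h2
    rw [h, geg_eval_rec]

noncomputable def Dl (z : Fin n → ℝ) (p : MvPolynomial (Fin n) ℝ) : MvPolynomial (Fin n) ℝ :=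
  ∑ j, MC (z j) * MvPolynomial.pderiv j p

noncomputable def lap (p : MvPolynomial (Fin n) ℝ) : MvPolynomial (Fin n) ℝ :=
  ∑ j : Fin n, MvPolynomial.pderiv j (MvPolynomial.pderiv j p)

noncomputable def Ef (p : MvPolynomial (Fin n) ℝ) : MvPolynomial (Fin n) ℝ :=
  ∑ j : Fin n, MX j * MvPolynomial.pderiv j p

lemma pderiv_Lf (z : Fin n → ℝ) (j : Fin n) :
    MvPolynomial.pderiv j (Lf z) = MC (z j) := by
  have : ∀ m : Fin n, MvPolynomial.pderiv j (MC (z m) * MX m)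
      = if m = j then MC (z m) else 0 := by
    intro m
    rw [MvPolynomial.pderiv_C_mul]
    by_cases h : m = j
    · subst h; simp
    · simp [MvPolynomial.pderiv_X_of_ne h, h]
  rw [Lf, map_sum]
  simp only [this]
  simp

lemma pderiv_Qf (j : Fin n) :
    MvPolynomial.pderiv j (Qf n) = 2 * MX j := by
  have : ∀ m : Fin n, MvPolynomial.pderiv j ((MX m : MvPolynomial (Fin n) ℝ) ^ 2)
      = if m = j then (2 : MvPolynomial (Fin n) ℝ) * MX j else 0 := by
    intro m
    by_cases h : m = j
    · subst h
      rw [sq, MvPolynomial.pderiv_mul]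
      simp [two_mul]
    · rw [sq, MvPolynomial.pderiv_mul]
      simp [MvPolynomial.pderiv_X_of_ne h, h]
  rw [Qf, map_sum]
  simp only [this]
  simp

lemma lap_C_mul (c : ℝ) (p : MvPolynomial (Fin n) ℝ) :
    lap (MC c * p) = MC c * lap p := by
  simp [lap, MvPolynomial.pderiv_C_mul, Finset.mul_sum]

lemma lap_sub (p q : MvPolynomial (Fin n) ℝ) : lap (p - q) = lap p - lap q := by
  simp [lap, Finset.sum_sub_distrib]

lemma Dl_C_mul (z : Fin n → ℝ) (c : ℝ) (p : MvPolynomial (Fin n) ℝ) :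
    Dl z (MC c * p) = MC c * Dl z p := by
  simp only [Dl, MvPolynomial.pderiv_C_mul, Finset.mul_sum]
  exact Finset.sum_congr rfl fun j _ => by ring

lemma Dl_sub (z : Fin n → ℝ) (p q : MvPolynomial (Fin n) ℝ) :
    Dl z (p - q) = Dl z p - Dl z q := by
  simp [Dl, Finset.sum_sub_distrib, mul_sub]

lemma lap_mul (p q : MvPolynomial (Fin n) ℝ) :
    lap (p * q) = lap p * q + 2 * ∑ j, MvPolynomial.pderiv j p * MvPolynomial.pderiv j q
      + p * lap q := by
  simp only [lap, MvPolynomial.pderiv_mul, map_add, Finset.sum_add_distrib]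
  rw [← Finset.sum_mul, ← Finset.mul_sum]
  ring

lemma Dl_mul (z : Fin n → ℝ) (p q : MvPolynomial (Fin n) ℝ) :
    Dl z (p * q) = Dl z p * q + p * Dl z q := by
  simp only [Dl, MvPolynomial.pderiv_mul, mul_add, Finset.sum_add_distrib]
  rw [Finset.sum_mul, Finset.mul_sum]
  congr 1
  · exact Finset.sum_congr rfl fun j _ => by ring
  · exact Finset.sum_congr rfl fun j _ => by ring

lemma lap_L_mul (z : Fin n → ℝ) (f : MvPolynomial (Fin n) ℝ) :
    lap (Lf z * f) = Lf z * lap f + 2 * Dl z f := by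
  rw [lap_mul]
  have h1 : lap (Lf z) = 0 := by
    simp [lap, pderiv_Lf, MvPolynomial.pderiv_C]
  have h2 : ∑ j, MvPolynomial.pderiv j (Lf z) * MvPolynomial.pderiv j f = Dl z f := by
    simp [pderiv_Lf, Dl]
  rw [h1, h2]; ring

lemma lap_Q_mul (f : MvPolynomial (Fin n) ℝ) :
    lap (Qf n * f) = Qf n * lap f + MC (2 * (n : ℝ)) * f + 4 * Ef f := by
  rw [lap_mul]
  have h1 : lap (Qf n) = MC (2 * (n : ℝ)) := by
    simp only [lap, pderiv_Qf]
    have e : ∀ j : Fin n, MvPolynomial.pderiv j ((2 : MvPolynomial (Fin n) ℝ) * MX j)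
        = (2 : MvPolynomial (Fin n) ℝ) := by
      intro j
      rw [two_mul, map_add, MvPolynomial.pderiv_X_self]
      norm_num
    simp only [e]
    rw [Finset.sum_const, Finset.card_univ, Fintype.card_fin, nsmul_eq_mul]
    rw [show MC (2 * (n : ℝ)) = MC (n : ℝ) * MC 2 from by rw [← map_mul]; ring_nf]
    rw [map_natCast, map_ofNat]
  have h2 : ∑ j, MvPolynomial.pderiv j (Qf n) * MvPolynomial.pderiv j f = 2 * Ef f := by
    simp only [pderiv_Qf, Ef, Finset.mul_sum]
    exact Finset.sum_congr rfl fun j _ => by ring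
  rw [h1, h2]; ring

lemma Dl_L (z : Fin n → ℝ) (hz : ∑ j, z j ^ 2 = 1) : Dl z (Lf z) = 1 := by
  simp only [Dl, pderiv_Lf, ← MvPolynomial.C_mul, ← map_sum]
  rw [show ∑ j, z j * z j = 1 by rw [← hz]; exact Finset.sum_congr rfl fun j _ => (sq (z j)).symm]
  exact MvPolynomial.C_1

lemma Dl_Q (z : Fin n → ℝ) : Dl z (Qf n) = 2 * Lf z := by
  simp only [Dl, pderiv_Qf, Lf, Finset.mul_sum]
  exact Finset.sum_congr rfl fun j _ => by ring

lemma deg_univ (m : Fin n →₀ ℕ) : Finsupp.degree m = ∑ j : Fin n, m j :=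
  Finset.sum_subset (Finset.subset_univ _)
    (fun j _ hj => Finsupp.notMem_support_iff.mp hj)

lemma single_add_sub (m : Fin n →₀ ℕ) (j : Fin n) (h : m j ≠ 0) :
    Finsupp.single j 1 + (m - Finsupp.single j 1) = m := by
  ext k
  simp only [Finsupp.add_apply, Finsupp.tsub_apply, Finsupp.single_apply]
  by_cases hk : j = k
  · subst hk; simp; omega
  · simp [hk]

lemma X_mul_pderiv_monomial (j : Fin n) (m : Fin n →₀ ℕ) (c : ℝ) :
    MX j * MvPolynomial.pderiv j (MvPolynomial.monomial m c)
      = MvPolynomial.monomial m (c * (m j : ℝ)) := by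
  rw [MvPolynomial.pderiv_monomial]
  by_cases h : m j = 0
  · simp [h]
  · rw [show (MX j : MvPolynomial (Fin n) ℝ)
        = MvPolynomial.monomial (Finsupp.single j 1) 1 from rfl,
      MvPolynomial.monomial_mul, single_add_sub m j h, one_mul]

lemma Ef_sum {ι : Type*} (s : Finset ι) (g : ι → MvPolynomial (Fin n) ℝ) :
    Ef (∑ v ∈ s, g v) = ∑ v ∈ s, Ef (g v) := by
  simp only [Ef, map_sum, Finset.mul_sum]
  exact Finset.sum_comm

lemma euler {f : MvPolynomial (Fin n) ℝ} {d : ℕ} (hf : f.IsHomogeneous d) :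
    Ef f = MC (d : ℝ) * f := by
  conv_lhs => rw [f.as_sum]
  conv_rhs => rw [f.as_sum]
  rw [Ef_sum, Finset.mul_sum]
  refine Finset.sum_congr rfl fun m hm => ?_
  have hdeg : ∑ j : Fin n, m j = d := by
    rw [← deg_univ, Finsupp.degree_eq_weight_one]
    exact hf (MvPolynomial.mem_support_iff.mp hm)
  rw [show Ef (MvPolynomial.monomial m (MvPolynomial.coeff m f))
      = ∑ j : Fin n, MvPolynomial.monomial m (MvPolynomial.coeff m f * (m j : ℝ)) from
    Finset.sum_congr rfl fun j _ => X_mul_pderiv_monomial j m _]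
  rw [← map_sum, ← Finset.mul_sum, ← Nat.cast_sum, hdeg,
    MvPolynomial.C_mul_monomial, mul_comm]

lemma homog_pderiv {f : MvPolynomial (Fin n) ℝ} {d : ℕ} (hf : f.IsHomogeneous (d + 1))
    (j : Fin n) : (MvPolynomial.pderiv j f).IsHomogeneous d := by
  conv in f => rw [f.as_sum]
  rw [map_sum]
  apply MvPolynomial.IsHomogeneous.sum
  intro m hm
  rw [MvPolynomial.pderiv_monomial]
  by_cases h : m j = 0
  · simp [h]
    exact MvPolynomial.isHomogeneous_zero _ _ _
  · apply MvPolynomial.isHomogeneous_monomial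
    have hdeg : ∑ k : Fin n, m k = d + 1 := by
      rw [← deg_univ, Finsupp.degree_eq_weight_one]
      exact hf (MvPolynomial.mem_support_iff.mp hm)
    rw [deg_univ]
    have e1 : ∀ k : Fin n, ((m - Finsupp.single j 1 : Fin n →₀ ℕ)) k
        = m k - Finsupp.single j 1 k := fun k => Finsupp.tsub_apply _ _ _
    simp only [e1]
    rw [← Finset.add_sum_erase _ _ (Finset.mem_univ j)] at hdeg ⊢
    have e2 : ∑ k ∈ Finset.univ.erase j, (m k - Finsupp.single j 1 k)
        = ∑ k ∈ Finset.univ.erase j, m k := by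
      refine Finset.sum_congr rfl fun k hk => ?_
      rw [Finsupp.single_apply, if_neg (Ne.symm (Finset.ne_of_mem_erase hk)), Nat.sub_zero]
    rw [e2, Finsupp.single_apply, if_pos rfl]
    omega

lemma homog_Lf (z : Fin n → ℝ) : (Lf z).IsHomogeneous 1 :=
  MvPolynomial.IsHomogeneous.sum _ _ _ fun j _ => MvPolynomial.isHomogeneous_C_mul_X _ _

lemma homog_Qf : (Qf n).IsHomogeneous 2 :=
  MvPolynomial.IsHomogeneous.sum _ _ _ fun j _ => MvPolynomial.isHomogeneous_X_pow _ _

lemma homog_F (lam : ℝ) (z : Fin n → ℝ) : ∀ i, (F lam z i).IsHomogeneous i := by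
  apply two_step
  · exact MvPolynomial.isHomogeneous_one _ _
  · exact ((homog_Lf z).C_mul _)
  · intro i ih1 ih2
    show (F lam z (i+2)).IsHomogeneous (i+2)
    rw [show F lam z (i+2) = MC (2 * ((i : ℝ) + 2 + lam - 1) / ((i : ℝ) + 2)) * (Lf z * F lam z (i + 1))
        - MC (((i : ℝ) + 2 + 2 * lam - 2) / ((i : ℝ) + 2)) * (Qf n * F lam z i) from rfl]
    apply MvPolynomial.IsHomogeneous.sub
    · have := ((homog_Lf z).mul ih2).C_mul (2 * ((i : ℝ) + 2 + lam - 1) / ((i : ℝ) + 2))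
      simpa [show 1 + (i + 1) = i + 2 from by omega] using this
    · have := (homog_Qf.mul ih1).C_mul (((i : ℝ) + 2 + 2 * lam - 2) / ((i : ℝ) + 2))
      simpa [show 2 + i = i + 2 from by omega] using this

lemma lap_Lf (z : Fin n → ℝ) : lap (Lf z) = 0 := by
  simp [lap, pderiv_Lf, MvPolynomial.pderiv_C]

lemma lapD (lam : ℝ) (z : Fin n → ℝ) (hz : ∑ j, z j ^ 2 = 1)
    (hn : (n : ℝ) = 2 * lam + 2) :
    ∀ i, lap (F lam z i) = 0
      ∧ Dl z (F lam z (i + 1)) = MC ((i : ℝ) + 2 * lam) * F lam z i := by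
  have hC : ∀ c : ℝ, c ≠ 0 → (MC c : MvPolynomial (Fin n) ℝ) ≠ 0 := by
    intro c hc
    simpa [MvPolynomial.C_eq_zero] using hc
  apply two_step
  · constructor
    · simp [F, lap]
    · show Dl z (MC (2 * lam) * Lf z) = MC ((0 : ℕ) + 2 * lam) * F lam z 0
      rw [Dl_C_mul, Dl_L z hz]
      show MC (2 * lam) * 1 = MC ((0 : ℕ) + 2 * lam) * 1
      norm_num
  · constructor
    · show lap (MC (2 * lam) * Lf z) = 0
      rw [lap_C_mul, lap_Lf, mul_zero]
    · -- Dl z (F 2) = MC (1 + 2*lam) * F 1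
      have h := congrArg (Dl z) (F_rec lam z 0)
      rw [Dl_C_mul, Dl_sub, Dl_C_mul, Dl_C_mul, Dl_mul, Dl_mul, Dl_L z hz,
        Dl_Q] at h
      have hF1 : Dl z (F lam z 1) = MC (2 * lam) := by
        show Dl z (MC (2 * lam) * Lf z) = MC (2 * lam)
        rw [Dl_C_mul, Dl_L z hz, mul_one]
      have hF0 : Dl z (F lam z 0) = 0 := by
        show Dl z 1 = 0
        simp [Dl]
      rw [hF1, hF0] at h
      apply mul_left_cancel₀ (hC _ (by norm_num : ((0:ℕ) : ℝ) + 2 ≠ 0))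
      rw [h]
      show _ = MC (((0:ℕ):ℝ) + 2) * (MC (((1:ℕ):ℝ) + 2 * lam) * F lam z 1)
      rw [show F lam z 1 = MC (2 * lam) * Lf z from rfl,
        show F lam z 0 = 1 from rfl]
      push_cast
      simp only [map_mul, map_add, map_sub, map_one, map_ofNat, map_zero]
      ring
  · rintro i ⟨hA0, hB0⟩ ⟨hA1, hB1⟩
    constructor
    · -- lap (F (i+2)) = 0
      have h := congrArg lap (F_rec lam z i)
      rw [lap_C_mul, lap_sub, lap_C_mul, lap_C_mul, lap_L_mul, lap_Q_mul,
        hA1, hA0, hB0, euler (homog_F lam z i)] at h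
      apply mul_left_cancel₀ (hC _ (by positivity : ((i:ℕ) : ℝ) + 2 ≠ 0))
      rw [h, mul_zero, hn]
      push_cast
      simp only [map_mul, map_add, map_sub, map_one, map_ofNat, map_natCast]
      ring
    · -- Dl z (F (i+3)) = MC ((i+1) + 2*lam) * F (i+2)
      have h := congrArg (Dl z) (F_rec lam z (i + 1))
      rw [Dl_C_mul, Dl_sub, Dl_C_mul, Dl_C_mul, Dl_mul, Dl_mul, Dl_L z hz,
        Dl_Q, hB1, hB0] at h
      have hrec := F_rec lam z i
      apply mul_left_cancel₀ (hC _ (by positivity : (((i:ℕ):ℝ) + 1) + 2 ≠ 0))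
      rw [show (((i + 1 :ℕ)):ℝ) = ((i:ℕ):ℝ) + 1 from by push_cast; ring] at h
      rw [show i + 1 + 1 = i + 2 from rfl] at h
      rw [h]
      show _ = MC (((i:ℕ):ℝ) + 1 + 2) * (MC (((i+2:ℕ) : ℝ) + 2 * lam) * F lam z (i + 2))
      push_cast
      push_cast at hrec
      simp only [map_mul, map_add, map_sub, map_one, map_ofNat, map_natCast] at hrec ⊢
      linear_combination (-((i : MvPolynomial (Fin n) ℝ) + 1 + 2 * MC lam)) * hrec

noncomputable def cc (lam : ℝ) : ℕ → ℝ
  | 0 => 1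
  | 1 => 2 * lam
  | (i + 2) => (2 * ((i : ℝ) + 2 + lam - 1) / ((i : ℝ) + 2)) * cc lam (i + 1)

lemma cc_pos (lam : ℝ) (hlam : 0 < lam) : ∀ i, 0 < cc lam i := by
  apply two_step
  · norm_num [cc]
  · show (0:ℝ) < 2 * lam; positivity
  · intro i _ ih2
    show 0 < (2 * ((i : ℝ) + 2 + lam - 1) / ((i : ℝ) + 2)) * cc lam (i + 1)
    have h1 : (0:ℝ) < 2 * ((i : ℝ) + 2 + lam - 1) := by
      have : (0:ℝ) ≤ (i : ℝ) := Nat.cast_nonneg i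
      nlinarith
    have h2 : (0:ℝ) < (i : ℝ) + 2 := by positivity
    exact mul_pos (div_pos h1 h2) ih2

lemma F_decomp (lam : ℝ) (z : Fin n → ℝ) :
    ∀ i, ∃ r, F lam z i = MC (cc lam i) * Lf z ^ i + Qf n * r := by
  apply two_step
  · exact ⟨0, by simp [F, cc]⟩
  · exact ⟨0, by simp [F, cc]⟩
  · rintro i _ ⟨r, hr⟩
    refine ⟨MC (2 * ((i : ℝ) + 2 + lam - 1) / ((i : ℝ) + 2)) * (Lf z * r)
      - MC (((i : ℝ) + 2 + 2 * lam - 2) / ((i : ℝ) + 2)) * F lam z i, ?_⟩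
    rw [show F lam z (i + 2)
        = MC (2 * ((i : ℝ) + 2 + lam - 1) / ((i : ℝ) + 2)) * (Lf z * F lam z (i + 1))
          - MC (((i : ℝ) + 2 + 2 * lam - 2) / ((i : ℝ) + 2)) * (Qf n * F lam z i) from rfl,
      hr, show cc lam (i + 2)
        = (2 * ((i : ℝ) + 2 + lam - 1) / ((i : ℝ) + 2)) * cc lam (i + 1) from rfl,
      MvPolynomial.C_mul]
    ring

noncomputable def wt (m : Fin n →₀ ℕ) : ℝ := ∏ j : Fin n, (Nat.factorial (m j) : ℝ)

lemma wt_pos (m : Fin n →₀ ℕ) : 0 < wt m :=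
  Finset.prod_pos fun j _ => by exact_mod_cast Nat.factorial_pos (m j)

noncomputable def Bf (p q : MvPolynomial (Fin n) ℝ) : ℝ :=
  ∑ m ∈ p.support ∪ q.support, wt m * MvPolynomial.coeff m p * MvPolynomial.coeff m q

lemma Bf_eq_sum {p q : MvPolynomial (Fin n) ℝ} {s : Finset (Fin n →₀ ℕ)}
    (h : p.support ∪ q.support ⊆ s) :
    Bf p q = ∑ m ∈ s, wt m * MvPolynomial.coeff m p * MvPolynomial.coeff m q := by
  apply Finset.sum_subset h
  intro m _ hm
  rcases Finset.notMem_union.mp hm with ⟨h1, _⟩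
  rw [MvPolynomial.notMem_support_iff.mp h1]
  ring

lemma Bf_add_left (p₁ p₂ q : MvPolynomial (Fin n) ℝ) :
    Bf (p₁ + p₂) q = Bf p₁ q + Bf p₂ q := by
  set s := p₁.support ∪ p₂.support ∪ q.support with hs
  have h1 : (p₁ + p₂).support ∪ q.support ⊆ s := by
    intro m hm
    rw [hs]
    rcases Finset.mem_union.mp hm with h | h
    · rcases Finset.mem_union.mp (MvPolynomial.support_add h) with h' | h'
      · exact Finset.mem_union_left _ (Finset.mem_union_left _ h')
      · exact Finset.mem_union_left _ (Finset.mem_union_right _ h')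
    · exact Finset.mem_union_right _ h
  have h2 : p₁.support ∪ q.support ⊆ s := by
    intro m hm
    rw [hs]
    rcases Finset.mem_union.mp hm with h | h
    · exact Finset.mem_union_left _ (Finset.mem_union_left _ h)
    · exact Finset.mem_union_right _ h
  have h3 : p₂.support ∪ q.support ⊆ s := by
    intro m hm
    rw [hs]
    rcases Finset.mem_union.mp hm with h | h
    · exact Finset.mem_union_left _ (Finset.mem_union_right _ h)
    · exact Finset.mem_union_right _ h
  rw [Bf_eq_sum h1, Bf_eq_sum h2, Bf_eq_sum h3, ← Finset.sum_add_distrib]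
  refine Finset.sum_congr rfl fun m _ => ?_
  rw [MvPolynomial.coeff_add]
  ring

lemma Bf_add_right (p q₁ q₂ : MvPolynomial (Fin n) ℝ) :
    Bf p (q₁ + q₂) = Bf p q₁ + Bf p q₂ := by
  set s := p.support ∪ q₁.support ∪ q₂.support with hs
  have h1 : p.support ∪ (q₁ + q₂).support ⊆ s := by
    intro m hm
    rw [hs]
    rcases Finset.mem_union.mp hm with h | h
    · exact Finset.mem_union_left _ (Finset.mem_union_left _ h)
    · rcases Finset.mem_union.mp (MvPolynomial.support_add h) with h' | h'
      · exact Finset.mem_union_left _ (Finset.mem_union_right _ h')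
      · exact Finset.mem_union_right _ h'
  have h2 : p.support ∪ q₁.support ⊆ s := by
    intro m hm
    rw [hs]
    rcases Finset.mem_union.mp hm with h | h
    · exact Finset.mem_union_left _ (Finset.mem_union_left _ h)
    · exact Finset.mem_union_left _ (Finset.mem_union_right _ h)
  have h3 : p.support ∪ q₂.support ⊆ s := by
    intro m hm
    rw [hs]
    rcases Finset.mem_union.mp hm with h | h
    · exact Finset.mem_union_left _ (Finset.mem_union_left _ h)
    · exact Finset.mem_union_right _ h
  rw [Bf_eq_sum h1, Bf_eq_sum h2, Bf_eq_sum h3, ← Finset.sum_add_distrib]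
  refine Finset.sum_congr rfl fun m _ => ?_
  rw [MvPolynomial.coeff_add]
  ring

lemma Bf_zero_left (q : MvPolynomial (Fin n) ℝ) : Bf 0 q = 0 := by
  simp [Bf]

lemma Bf_zero_right (p : MvPolynomial (Fin n) ℝ) : Bf p 0 = 0 := by
  simp [Bf]

lemma Bf_C_mul_left (c : ℝ) (p q : MvPolynomial (Fin n) ℝ) :
    Bf (MC c * p) q = c * Bf p q := by
  by_cases hc : c = 0
  · simp [hc, Bf_zero_left]
  have h1 : (MC c * p).support = p.support := by
    ext m
    simp [MvPolynomial.mem_support_iff, MvPolynomial.coeff_C_mul, hc]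
  rw [show Bf (MC c * p) q
      = ∑ m ∈ p.support ∪ q.support,
        wt m * MvPolynomial.coeff m (MC c * p) * MvPolynomial.coeff m q from by
    rw [Bf]; rw [h1], Bf, Finset.mul_sum]
  refine Finset.sum_congr rfl fun m _ => ?_
  rw [MvPolynomial.coeff_C_mul]
  ring

lemma Bf_C_mul_right (c : ℝ) (p q : MvPolynomial (Fin n) ℝ) :
    Bf p (MC c * q) = c * Bf p q := by
  by_cases hc : c = 0
  · simp [hc, Bf_zero_right]
  have h1 : (MC c * q).support = q.support := by
    ext m
    simp [MvPolynomial.mem_support_iff, MvPolynomial.coeff_C_mul, hc]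
  rw [show Bf p (MC c * q)
      = ∑ m ∈ p.support ∪ q.support,
        wt m * MvPolynomial.coeff m p * MvPolynomial.coeff m (MC c * q) from by
    rw [Bf]; rw [h1], Bf, Finset.mul_sum]
  refine Finset.sum_congr rfl fun m _ => ?_
  rw [MvPolynomial.coeff_C_mul]
  ring

lemma Bf_sum_left {ι : Type*} (s : Finset ι) (f : ι → MvPolynomial (Fin n) ℝ)
    (q : MvPolynomial (Fin n) ℝ) : Bf (∑ a ∈ s, f a) q = ∑ a ∈ s, Bf (f a) q := by
  classical
  induction s using Finset.induction_on with
  | empty => simp [Bf_zero_left]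
  | @insert a s hne ih => rw [Finset.sum_insert hne, Finset.sum_insert hne, Bf_add_left, ih]

lemma Bf_sum_right {ι : Type*} (s : Finset ι) (p : MvPolynomial (Fin n) ℝ)
    (f : ι → MvPolynomial (Fin n) ℝ) : Bf p (∑ a ∈ s, f a) = ∑ a ∈ s, Bf p (f a) := by
  classical
  induction s using Finset.induction_on with
  | empty => simp [Bf_zero_right]
  | @insert a s hne ih => rw [Finset.sum_insert hne, Finset.sum_insert hne, Bf_add_right, ih]

lemma Bf_mono_right (p : MvPolynomial (Fin n) ℝ) (t : Fin n →₀ ℕ) (b : ℝ) :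
    Bf p (MvPolynomial.monomial t b) = wt t * MvPolynomial.coeff t p * b := by
  rw [Bf]
  rw [Finset.sum_eq_single t]
  · rw [MvPolynomial.coeff_monomial, if_pos rfl]
  · intro m _ hmt
    rw [MvPolynomial.coeff_monomial, if_neg (fun h => hmt h.symm), mul_zero]
  · intro ht
    rcases Finset.notMem_union.mp ht with ⟨h1, _⟩
    rw [MvPolynomial.notMem_support_iff.mp h1]
    ring

lemma Bf_mono_left (q : MvPolynomial (Fin n) ℝ) (t : Fin n →₀ ℕ) (b : ℝ) :
    Bf (MvPolynomial.monomial t b) q = wt t * b * MvPolynomial.coeff t q := by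
  rw [Bf]
  rw [Finset.sum_eq_single t]
  · rw [MvPolynomial.coeff_monomial, if_pos rfl]
  · intro m _ hmt
    rw [MvPolynomial.coeff_monomial, if_neg (fun h => hmt h.symm), mul_zero, zero_mul]
  · intro ht
    rcases Finset.notMem_union.mp ht with ⟨_, h2⟩
    rw [MvPolynomial.notMem_support_iff.mp h2]
    ring

lemma Bf_nonneg (p : MvPolynomial (Fin n) ℝ) : 0 ≤ Bf p p := by
  apply Finset.sum_nonneg
  intro m _
  rw [mul_assoc]
  exact mul_nonneg (wt_pos m).le (mul_self_nonneg _)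

lemma wt_succ (m : Fin n →₀ ℕ) (j : Fin n) (h : m j ≠ 0) :
    wt m = wt (m - Finsupp.single j 1) * (m j : ℝ) := by
  rw [wt, wt, ← Finset.prod_erase_mul _ _ (Finset.mem_univ j),
    ← Finset.prod_erase_mul _ _ (Finset.mem_univ j)]
  have e1 : ∀ k ∈ Finset.univ.erase j,
      ((Nat.factorial (((m - Finsupp.single j 1 : Fin n →₀ ℕ)) k) : ℝ))
        = (Nat.factorial (m k) : ℝ) := by
    intro k hk
    rw [Finsupp.tsub_apply, Finsupp.single_apply,
      if_neg (Ne.symm (Finset.ne_of_mem_erase hk)), Nat.sub_zero]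
  rw [Finset.prod_congr rfl e1]
  have e2 : ((m - Finsupp.single j 1 : Fin n →₀ ℕ)) j = m j - 1 := by
    rw [Finsupp.tsub_apply, Finsupp.single_apply, if_pos rfl]
  rw [e2]
  obtain ⟨u, hu⟩ : ∃ u, m j = u + 1 := ⟨m j - 1, by omega⟩
  rw [hu]
  simp [Nat.factorial_succ]
  ring

lemma Bf_X_mul (j : Fin n) (p q : MvPolynomial (Fin n) ℝ) :
    Bf (MX j * p) q = Bf p (MvPolynomial.pderiv j q) := by
  induction q using MvPolynomial.induction_on' with
  | add q₁ q₂ ih1 ih2 => rw [map_add, Bf_add_right, Bf_add_right, ih1, ih2]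
  | monomial t b =>
    rw [MvPolynomial.pderiv_monomial, Bf_mono_right, Bf_mono_right]
    rw [MvPolynomial.coeff_X_mul']
    by_cases h : j ∈ t.support
    · have hj : t j ≠ 0 := Finsupp.mem_support_iff.mp h
      rw [if_pos h, wt_succ t j hj]
      ring
    · have hj : t j = 0 := Finsupp.notMem_support_iff.mp h
      rw [if_neg h]
      simp [hj]

lemma Bf_Q_mul (p q : MvPolynomial (Fin n) ℝ) :
    Bf (Qf n * p) q = Bf p (lap q) := by
  rw [Qf, Finset.sum_mul, Bf_sum_left, lap, Bf_sum_right]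
  refine Finset.sum_congr rfl fun j _ => ?_
  rw [show (MX j : MvPolynomial (Fin n) ℝ) ^ 2 * p = MX j * (MX j * p) from by ring,
    Bf_X_mul, Bf_X_mul]

lemma eval_homog0 {q : MvPolynomial (Fin n) ℝ} (hq : q.IsHomogeneous 0) (y : Fin n → ℝ) :
    MvPolynomial.eval y q = MvPolynomial.coeff 0 q := by
  rw [MvPolynomial.eval_eq]
  rw [Finset.sum_eq_single (0 : Fin n →₀ ℕ)]
  · simp
  · intro m hm hm0
    exfalso
    apply hm0
    have : Finsupp.degree m = 0 := by
      rw [Finsupp.degree_eq_weight_one]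
      exact hq (MvPolynomial.mem_support_iff.mp hm)
    exact (Finsupp.degree_eq_zero_iff m).mp this
  · intro h0
    rw [MvPolynomial.notMem_support_iff.mp h0]
    simp

lemma Bf_Lpow (y : Fin n → ℝ) :
    ∀ i, ∀ q : MvPolynomial (Fin n) ℝ, q.IsHomogeneous i →
      Bf (Lf y ^ i) q = (Nat.factorial i : ℝ) * MvPolynomial.eval y q := by
  intro i
  induction i with
  | zero =>
    intro q hq
    rw [pow_zero, show (1 : MvPolynomial (Fin n) ℝ)
        = MvPolynomial.monomial 0 1 from rfl, Bf_mono_left, eval_homog0 hq]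
    simp [wt]
  | succ i ih =>
    intro q hq
    have hL : Lf y ^ (i + 1) = ∑ j, MC (y j) * (MX j * Lf y ^ i) := by
      rw [pow_succ]
      conv_lhs => rw [Lf]
      rw [Finset.mul_sum]
      exact Finset.sum_congr rfl fun j _ => by rw [← Lf]; ring
    rw [hL, Bf_sum_left]
    have e1 : ∀ j : Fin n, Bf (MC (y j) * (MX j * Lf y ^ i)) q
        = y j * ((Nat.factorial i : ℝ)
            * MvPolynomial.eval y (MvPolynomial.pderiv j q)) := by
      intro j
      rw [Bf_C_mul_left, Bf_X_mul, ih _ (homog_pderiv hq j)]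
    rw [Finset.sum_congr rfl fun j _ => e1 j]
    have he := congrArg (MvPolynomial.eval y) (euler hq)
    rw [Ef, map_sum, map_mul, MvPolynomial.eval_C] at he
    simp only [map_mul, MvPolynomial.eval_X] at he
    have e2 : ∑ j : Fin n, y j * ((Nat.factorial i : ℝ)
        * MvPolynomial.eval y (MvPolynomial.pderiv j q))
        = (Nat.factorial i : ℝ)
            * ∑ j : Fin n, y j * MvPolynomial.eval y (MvPolynomial.pderiv j q) := by
      rw [Finset.mul_sum]
      exact Finset.sum_congr rfl fun j _ => by ring
    rw [e2, he, Nat.factorial_succ]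
    push_cast
    ring

lemma Bf_F (lam : ℝ) (y z : Fin n → ℝ) (hz : ∑ j, z j ^ 2 = 1)
    (hn : (n : ℝ) = 2 * lam + 2) (i : ℕ) :
    Bf (F lam y i) (F lam z i)
      = cc lam i * (Nat.factorial i : ℝ) * MvPolynomial.eval y (F lam z i) := by
  obtain ⟨r, hr⟩ := F_decomp lam y i
  rw [hr, Bf_add_left, Bf_C_mul_left, Bf_Lpow y i _ (homog_F lam z i), Bf_Q_mul,
    (lapD lam z hz hn i).1, Bf_zero_right]
  ring

end Geg

lemma geg_eq (lam : ℝ) (i : ℕ) :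
    gegenbauer lam (i + 2)
      = C (2 * ((i : ℝ) + 2 + lam - 1) / ((i : ℝ) + 2)) * X * gegenbauer lam (i + 1)
        - C (((i : ℝ) + 2 + 2 * lam - 2) / ((i : ℝ) + 2)) * gegenbauer lam i := rfl

lemma geg_lam0 : ∀ i : ℕ, gegenbauer 0 (i + 1) = 0 := by
  apply Geg.two_step
  · show gegenbauer 0 1 = 0
    rw [show gegenbauer 0 1 = C (2 * (0:ℝ)) * X from rfl]
    norm_num
  · show gegenbauer 0 2 = 0
    rw [show (2 : ℕ) = 0 + 2 from rfl, geg_eq]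
    rw [show gegenbauer 0 1 = C (2 * (0:ℝ)) * X from rfl]
    norm_num
  · intro i ih1 ih2
    show gegenbauer 0 (i + 3) = 0
    rw [show i + 3 = (i + 1) + 2 from rfl, geg_eq, ih1, ih2]
    ring

/-- The Gegenbauer kernel is positive semidefinite on the sphere: for unit vectors
`x₁, …, x_k` in `ℝⁿ` and reals `t₁, …, t_k`,
`∑_{a,b} t_a t_b C_i^{n/2-1}(⟨x_a, x_b⟩) ≥ 0`. -/
theorem stmt_12 (n : ℕ) (hn : 2 ≤ n) (i : ℕ) (k : ℕ)
    (x : Fin k → EuclideanSpace ℝ (Fin n)) (hx : ∀ a, ‖x a‖ = 1) (t : Fin k → ℝ) :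
    0 ≤ ∑ a, ∑ b, t a * t b * (gegenbauer ((n : ℝ) / 2 - 1) i).eval ⟪x a, x b⟫ := by
  classical
  have hxs : ∀ a, ∑ j, x a j ^ 2 = 1 := by
    intro a
    have h := hx a
    rw [EuclideanSpace.norm_eq] at h
    have h2 : ∑ j, ‖x a j‖ ^ 2 = 1 := Real.sqrt_eq_one.mp h
    simpa [Real.norm_eq_abs, sq_abs] using h2
  have hinner : ∀ a b, ⟪x a, x b⟫ = ∑ j, x a j * x b j := by
    intro a b
    rw [PiLp.inner_apply]
    simp [RCLike.inner_apply, conj_trivial]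
    exact Finset.sum_congr rfl fun j _ => mul_comm _ _
  rcases Nat.lt_or_ge n 3 with h3 | h3
  · -- n = 2 : the parameter lam is 0
    have hn2 : n = 2 := by omega
    subst hn2
    rw [show ((2:ℕ) : ℝ) / 2 - 1 = 0 by norm_num]
    cases i with
    | zero =>
      have : ∀ a b : Fin k, t a * t b * (gegenbauer 0 0).eval ⟪x a, x b⟫ = t a * t b := by
        intro a b
        rw [show gegenbauer 0 0 = 1 from rfl]
        simp
      simp only [this]
      have e : ∑ a, ∑ b, t a * t b = (∑ a, t a) ^ 2 := by
        rw [sq, Finset.sum_mul_sum]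
      rw [e]
      exact sq_nonneg _
    | succ m =>
      rw [geg_lam0 m]
      simp
  · -- n ≥ 3
    set lam : ℝ := (n : ℝ) / 2 - 1 with hlamdef
    have h3' : (3 : ℝ) ≤ (n : ℝ) := by exact_mod_cast h3
    have hlam : 0 < lam := by rw [hlamdef]; linarith
    have hn' : (n : ℝ) = 2 * lam + 2 := by rw [hlamdef]; ring
    have key : ∀ a b : Fin k, (gegenbauer lam i).eval ⟪x a, x b⟫
        = MvPolynomial.eval (fun j => x a j) (Geg.F lam (fun j => x b j) i) := by
      intro a b
      rw [Geg.eval_F lam _ _ (hxs a), hinner a b]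
    have hc : (0:ℝ) < Geg.cc lam i * (Nat.factorial i : ℝ) := by
      apply mul_pos (Geg.cc_pos lam hlam i)
      exact_mod_cast Nat.factorial_pos i
    set S : MvPolynomial (Fin n) ℝ
      := ∑ a, MvPolynomial.C (t a) * Geg.F lam (fun j => x a j) i with hS
    have hBS : Geg.Bf S S = ∑ a, ∑ b, t a * t b
        * Geg.Bf (Geg.F lam (fun j => x a j) i) (Geg.F lam (fun j => x b j) i) := by
      rw [hS, Geg.Bf_sum_left]
      refine Finset.sum_congr rfl fun a _ => ?_
      rw [Geg.Bf_C_mul_left, Geg.Bf_sum_right, Finset.mul_sum]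
      refine Finset.sum_congr rfl fun b _ => ?_
      rw [Geg.Bf_C_mul_right]
      ring
    have hker : ∀ a b : Fin k,
        Geg.Bf (Geg.F lam (fun j => x a j) i) (Geg.F lam (fun j => x b j) i)
          = Geg.cc lam i * (Nat.factorial i : ℝ)
              * MvPolynomial.eval (fun j => x a j) (Geg.F lam (fun j => x b j) i) :=
      fun a b => Geg.Bf_F lam _ _ (hxs b) hn' i
    have hfinal : Geg.Bf S S = (Geg.cc lam i * (Nat.factorial i : ℝ))
        * ∑ a, ∑ b, t a * t b * (gegenbauer lam i).eval ⟪x a, x b⟫ := by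
      rw [hBS, Finset.mul_sum]
      refine Finset.sum_congr rfl fun a _ => ?_
      rw [Finset.mul_sum]
      refine Finset.sum_congr rfl fun b _ => ?_
      rw [hker a b, key a b]
      ring
    have hge := Geg.Bf_nonneg S
    rw [hfinal] at hge
    exact (mul_nonneg_iff_of_pos_left hc).mp hge
end

section
/- (Universal optimality of the simplex) Let n ≥ 1, 2 ≤ N ≤ n+1, and let f : (0,4] → ℝ be decreasing and convex. For any set C' of N points on the unit sphere S^{n−1} ⊂ ℝⁿ, the f-potential energy ∑_{x,y∈C', x≠y} f(|x−y|²) is at least N(N−1) f(2 + 2/(N−1)), with equality attained by the regular simplex (all pairwise inner products equal to −1/(N−1)). Moreover, if f is strictly convex, equality holds only when all pairwise squared distances in C' equal 2 + 2/(N−1). -/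
open Classical
open scoped RealInnerProductSpace
noncomputable section

lemma sum_erase_eq_offDiag {α β : Type*} [DecidableEq α] [AddCommMonoid β]
    (s : Finset α) (g : α → α → β) :
    ∑ x ∈ s, ∑ y ∈ s.erase x, g x y = ∑ q ∈ s.offDiag, g q.1 q.2 := by
  rw [(Finset.ext fun q => by simp [and_assoc] : s.offDiag = (s ×ˢ s).filter (fun a => a.1 ≠ a.2)),
    Finset.sum_filter, Finset.sum_product]
  refine Finset.sum_congr rfl fun x hx => ?_
  rw [← Finset.sum_filter]
  congr 1
  ext y
  simp only [Finset.mem_erase, Finset.mem_filter]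
  tauto

lemma aux_key (n N : ℕ) (hN2 : 2 ≤ N)
    (f : ℝ → ℝ) (hdec : AntitoneOn f (Set.Ioc 0 4)) (hconv : ConvexOn ℝ (Set.Ioc 0 4) f)
    (C' : Finset (EuclideanSpace ℝ (Fin n))) (hcard : C'.card = N)
    (hunit : ∀ x ∈ C', ‖x‖ = 1) :
    ((N : ℝ) * ((N : ℝ) - 1) * f (2 + 2 / ((N : ℝ) - 1)) ≤
        ∑ x ∈ C', ∑ y ∈ C'.erase x, f (‖x - y‖ ^ 2)) ∧
    (StrictConvexOn ℝ (Set.Ioc 0 4) f →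
      ∑ x ∈ C', ∑ y ∈ C'.erase x, f (‖x - y‖ ^ 2) =
        (N : ℝ) * ((N : ℝ) - 1) * f (2 + 2 / ((N : ℝ) - 1)) →
      ∀ x ∈ C', ∀ y ∈ C', x ≠ y → ‖x - y‖ ^ 2 = 2 + 2 / ((N : ℝ) - 1)) := by
  have hNr : (2:ℝ) ≤ (N:ℝ) := by exact_mod_cast hN2
  have hN1 : (1:ℝ) ≤ (N:ℝ) - 1 := by linarith
  -- basic facts about t0 and Mr before abstracting them
  have hMrpos : 0 < (N : ℝ) * ((N : ℝ) - 1) := by nlinarith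
  have ht0mem : 2 + 2 / ((N : ℝ) - 1) ∈ Set.Ioc (0:ℝ) 4 := by
    constructor
    · have : 0 < 2 / ((N:ℝ) - 1) := by positivity
      linarith
    · have : 2 / ((N:ℝ) - 1) ≤ 2 := by
        rw [div_le_iff₀ (by linarith)]; linarith
      linarith
  have hMt : (N : ℝ) * ((N : ℝ) - 1) * (2 + 2 / ((N : ℝ) - 1)) = 2 * (N:ℝ)^2 := by
    field_simp
    ring
  have hTcardnat : (C'.offDiag.card : ℝ) = (N : ℝ) * ((N : ℝ) - 1) := by
    rw [Finset.offDiag_card, hcard]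
    have h1 : N ≤ N * N := Nat.le_mul_of_pos_left N (by omega)
    push_cast [Nat.cast_sub h1]
    ring
  -- sum of squared distances bound
  have hinner_sum : ∑ x ∈ C', ∑ y ∈ C', ⟪x, y⟫ = ⟪∑ x ∈ C', x, ∑ y ∈ C', y⟫ := by
    rw [sum_inner]
    exact Finset.sum_congr rfl fun x _ => (inner_sum _ _ _).symm
  have hexp : ∑ x ∈ C', ∑ y ∈ C', ‖x - y‖ ^ 2
      = 2 * (N:ℝ)^2 - 2 * ⟪∑ x ∈ C', x, ∑ y ∈ C', y⟫ := by
    have step : ∀ x ∈ C', ∑ y ∈ C', ‖x - y‖ ^ 2 = 2 * (N:ℝ) - 2 * ∑ y ∈ C', ⟪x, y⟫ := by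
      intro x hx
      have : ∀ y ∈ C', ‖x - y‖ ^ 2 = 2 - 2 * ⟪x, y⟫ := by
        intro y hy
        rw [norm_sub_sq_real, hunit _ hx, hunit _ hy]; ring
      rw [Finset.sum_congr rfl this, Finset.sum_sub_distrib, Finset.sum_const, hcard,
        ← Finset.mul_sum]
      ring
    rw [Finset.sum_congr rfl step, Finset.sum_sub_distrib, Finset.sum_const, hcard,
      ← Finset.mul_sum, hinner_sum]
    push_cast; ring
  have hS2 : ∑ q ∈ C'.offDiag, ‖q.1 - q.2‖ ^ 2
      ≤ (N : ℝ) * ((N : ℝ) - 1) * (2 + 2 / ((N : ℝ) - 1)) := by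
    have hfull : ∑ q ∈ C'.offDiag, ‖q.1 - q.2‖ ^ 2 = ∑ x ∈ C', ∑ y ∈ C', ‖x - y‖ ^ 2 := by
      rw [← sum_erase_eq_offDiag C' (fun x y => ‖x - y‖ ^ 2)]
      refine Finset.sum_congr rfl fun x hx => ?_
      exact Finset.sum_erase C' (by simp)
    have hinner : (0:ℝ) ≤ ⟪∑ x ∈ C', x, ∑ y ∈ C', y⟫ := real_inner_self_nonneg
    rw [hfull, hexp, hMt]
    linarith
  -- abstract t0 and Mr
  set t0 : ℝ := 2 + 2 / ((N : ℝ) - 1) with ht0def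
  set Mr : ℝ := (N : ℝ) * ((N : ℝ) - 1) with hMrdef
  have hMr2N : Mr * t0 = 2 * (N:ℝ)^2 := hMt
  clear_value t0 Mr
  have hmem : ∀ q ∈ C'.offDiag, ‖q.1 - q.2‖ ^ 2 ∈ Set.Ioc (0:ℝ) 4 := by
    intro q hq
    obtain ⟨h1, h2, h3⟩ := Finset.mem_offDiag.1 hq
    constructor
    · exact pow_pos (norm_pos_iff.mpr (sub_ne_zero.2 h3)) 2
    · have hle : ‖q.1 - q.2‖ ≤ 2 := by
        calc ‖q.1 - q.2‖ ≤ ‖q.1‖ + ‖q.2‖ := norm_sub_le _ _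
        _ = 2 := by rw [hunit _ h1, hunit _ h2]; norm_num
      calc ‖q.1 - q.2‖ ^ 2 ≤ 2 ^ 2 := pow_le_pow_left₀ (norm_nonneg _) hle 2
      _ = 4 := by norm_num
  have hTne : C'.offDiag.Nonempty := by
    have : 1 < C'.card := by omega
    obtain ⟨a, ha, b, hb, hab⟩ := Finset.one_lt_card.1 this
    exact ⟨(a, b), Finset.mem_offDiag.2 ⟨ha, hb, hab⟩⟩
  have hw1 : ∑ _q ∈ C'.offDiag, Mr⁻¹ = 1 := by
    rw [Finset.sum_const, nsmul_eq_mul, hTcardnat]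
    exact mul_inv_cancel₀ (ne_of_gt hMrpos)
  have hmval : ∑ q ∈ C'.offDiag, Mr⁻¹ • ‖q.1 - q.2‖ ^ 2
      = Mr⁻¹ * ∑ q ∈ C'.offDiag, ‖q.1 - q.2‖ ^ 2 := by
    rw [Finset.mul_sum]; simp [smul_eq_mul]
  set m : ℝ := ∑ q ∈ C'.offDiag, Mr⁻¹ • ‖q.1 - q.2‖ ^ 2 with hm
  have hmle : m ≤ t0 := by
    rw [hmval]
    calc Mr⁻¹ * ∑ q ∈ C'.offDiag, ‖q.1 - q.2‖ ^ 2 ≤ Mr⁻¹ * (Mr * t0) :=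
          mul_le_mul_of_nonneg_left hS2 (by positivity)
    _ = t0 := by rw [← mul_assoc, inv_mul_cancel₀ (ne_of_gt hMrpos), one_mul]
  have hmpos : 0 < m := by
    rw [hmval]
    have h1 : 0 < ∑ q ∈ C'.offDiag, ‖q.1 - q.2‖ ^ 2 :=
      Finset.sum_pos (fun q hq => (hmem q hq).1) hTne
    positivity
  have hmmem : m ∈ Set.Ioc (0:ℝ) 4 := ⟨hmpos, le_trans hmle ht0mem.2⟩
  have hjensen : f m ≤ ∑ q ∈ C'.offDiag, Mr⁻¹ • f (‖q.1 - q.2‖ ^ 2) :=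
    hconv.map_sum_le (fun q _ => by positivity) hw1 hmem
  have hEsum : ∑ x ∈ C', ∑ y ∈ C'.erase x, f (‖x - y‖ ^ 2)
      = ∑ q ∈ C'.offDiag, f (‖q.1 - q.2‖ ^ 2) :=
    sum_erase_eq_offDiag C' (fun x y => f (‖x - y‖ ^ 2))
  have hsum_w : ∑ q ∈ C'.offDiag, Mr⁻¹ • f (‖q.1 - q.2‖ ^ 2)
      = Mr⁻¹ * ∑ q ∈ C'.offDiag, f (‖q.1 - q.2‖ ^ 2) := by
    rw [Finset.mul_sum]; simp [smul_eq_mul]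
  have hft0m : f t0 ≤ f m := hdec hmmem ht0mem hmle
  have h1 : Mr * f m ≤ ∑ q ∈ C'.offDiag, f (‖q.1 - q.2‖ ^ 2) := by
    have := mul_le_mul_of_nonneg_left hjensen (le_of_lt hMrpos)
    rw [hsum_w, ← mul_assoc, mul_inv_cancel₀ (ne_of_gt hMrpos), one_mul] at this
    exact this
  have h2 : Mr * f t0 ≤ Mr * f m := mul_le_mul_of_nonneg_left hft0m (le_of_lt hMrpos)
  constructor
  · rw [hEsum]; linarith
  · intro hsc heq x hx y hy hxy
    rw [hEsum] at heq
    have hfmeq : f m = f t0 := by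
      have h3 : Mr * f m = Mr * f t0 := le_antisymm (by linarith [heq ▸ h1]) h2
      exact mul_left_cancel₀ (ne_of_gt hMrpos) h3
    have hjeq : f m = ∑ q ∈ C'.offDiag, Mr⁻¹ • f (‖q.1 - q.2‖ ^ 2) := by
      apply le_antisymm hjensen
      rw [hsum_w, heq, ← mul_assoc, inv_mul_cancel₀ (ne_of_gt hMrpos), one_mul, hfmeq]
    have hall : ∀ q ∈ C'.offDiag, ‖q.1 - q.2‖ ^ 2 = m :=
      (hsc.map_sum_eq_iff (fun q _ => by positivity) hw1 hmem).1 (by rw [← hm, ← hjeq])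
    -- show m = t0
    have hm4 : m ≤ 4 := hmmem.2
    have ht04 : t0 ≤ 4 := ht0mem.2
    have ht0pos : 0 < t0 := ht0mem.1
    clear_value m
    have hmt0 : m = t0 := by
      by_contra hne
      have hlt : m < t0 := lt_of_le_of_ne hmle hne
      have hmidmem : (m + t0) / 2 ∈ Set.Ioc (0:ℝ) 4 := ⟨by linarith, by linarith⟩
      have hstrict : f ((m + t0) / 2) < (1/2 : ℝ) * f m + (1/2 : ℝ) * f t0 := by
        have h := hsc.2 hmmem ht0mem hne (by norm_num : (0:ℝ) < 1/2)
          (by norm_num : (0:ℝ) < 1/2) (by norm_num)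
        rw [show (1/2 : ℝ) • m + (1/2 : ℝ) • t0 = (m + t0) / 2 by
          simp [smul_eq_mul]; ring] at h
        simpa [smul_eq_mul] using h
      have hdecmid : f t0 ≤ f ((m + t0) / 2) := hdec hmidmem ht0mem (by linarith)
      rw [hfmeq] at hstrict
      linarith
    have := hall (x, y) (Finset.mem_offDiag.2 ⟨hx, hy, hxy⟩)
    simp only at this
    rw [this, hmt0]

/-- Universal optimality of the regular simplex: for `2 ≤ N ≤ n+1` and `f` decreasing and
convex on `(0,4]`, any `N` points on `S^{n-1}` have `f`-potential energy at least
`N(N-1) f(2 + 2/(N-1))`; equality holds for the regular simplex, and if `f` is strictly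
convex, equality forces all pairwise squared distances to equal `2 + 2/(N-1)`. -/
theorem stmt_13 (n N : ℕ) (hn : 1 ≤ n) (hN2 : 2 ≤ N) (hNn : N ≤ n + 1)
    (f : ℝ → ℝ) (hdec : AntitoneOn f (Set.Ioc 0 4)) (hconv : ConvexOn ℝ (Set.Ioc 0 4) f) :
    (∀ C' : Finset (EuclideanSpace ℝ (Fin n)), C'.card = N → (∀ x ∈ C', ‖x‖ = 1) →
      (N : ℝ) * ((N : ℝ) - 1) * f (2 + 2 / ((N : ℝ) - 1)) ≤
        ∑ x ∈ C', ∑ y ∈ C'.erase x, f (‖x - y‖ ^ 2)) ∧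
    (∀ C : Finset (EuclideanSpace ℝ (Fin n)), C.card = N → (∀ x ∈ C, ‖x‖ = 1) →
      (∀ x ∈ C, ∀ y ∈ C, x ≠ y → ⟪x, y⟫ = -1 / ((N : ℝ) - 1)) →
      ∑ x ∈ C, ∑ y ∈ C.erase x, f (‖x - y‖ ^ 2) =
        (N : ℝ) * ((N : ℝ) - 1) * f (2 + 2 / ((N : ℝ) - 1))) ∧
    (StrictConvexOn ℝ (Set.Ioc 0 4) f →
      ∀ C' : Finset (EuclideanSpace ℝ (Fin n)), C'.card = N → (∀ x ∈ C', ‖x‖ = 1) →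
      ∑ x ∈ C', ∑ y ∈ C'.erase x, f (‖x - y‖ ^ 2) =
        (N : ℝ) * ((N : ℝ) - 1) * f (2 + 2 / ((N : ℝ) - 1)) →
      ∀ x ∈ C', ∀ y ∈ C', x ≠ y → ‖x - y‖ ^ 2 = 2 + 2 / ((N : ℝ) - 1)) := by
  refine ⟨fun C' hcard hunit => (aux_key n N hN2 f hdec hconv C' hcard hunit).1,
    ?_, fun hsc C' hcard hunit heq =>
      (aux_key n N hN2 f hdec hconv C' hcard hunit).2 hsc heq⟩
  intro C hcard hunit hsimplex
  have hN1 : (1:ℝ) ≤ (N:ℝ) - 1 := by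
    have : (2:ℝ) ≤ (N:ℝ) := by exact_mod_cast hN2
    linarith
  have hdist : ∀ x ∈ C, ∀ y ∈ C, x ≠ y → ‖x - y‖ ^ 2 = 2 + 2 / ((N : ℝ) - 1) := by
    intro x hx y hy hxy
    rw [norm_sub_sq_real, hunit _ hx, hunit _ hy, hsimplex x hx y hy hxy]
    field_simp
    ring
  have step : ∀ x ∈ C, ∑ y ∈ C.erase x, f (‖x - y‖ ^ 2)
      = ((N:ℝ) - 1) * f (2 + 2 / ((N : ℝ) - 1)) := by
    intro x hx
    have : ∀ y ∈ C.erase x, f (‖x - y‖ ^ 2) = f (2 + 2 / ((N : ℝ) - 1)) := by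
      intro y hy
      obtain ⟨hne, hyC⟩ := Finset.mem_erase.1 hy
      rw [hdist x hx y hyC (Ne.symm hne)]
    rw [Finset.sum_congr rfl this, Finset.sum_const, Finset.card_erase_of_mem hx, hcard,
      nsmul_eq_mul, Nat.cast_sub (by omega : 1 ≤ N)]
    norm_num
  rw [Finset.sum_congr rfl step, Finset.sum_const, hcard, nsmul_eq_mul]
  ring

end
end

section
/- (Euclidean linear programming bound, lattice case) Let f : (0,∞) → [0,∞), and suppose h : ℝⁿ → ℝ satisfies h(x) ≤ f(|x|²) for all x ≠ 0 and h is the Fourier transform of a nonnegative continuous function g ∈ L¹(ℝⁿ). Then for any full-rank lattice Λ ⊂ ℝⁿ with covolume 1/δ, the energy ∑_{x∈Λ, x≠0} f(|x|²) is at least δ·(liminf_{t→0} g(t)) − h(0). -/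
open MeasureTheory Filter Finset
open scoped Real

noncomputable def S1 (N : ℕ) (θ : ℝ) : ℂ :=
  ∑ k ∈ Finset.range N, Complex.exp ((2 * π * k * θ : ℝ) * Complex.I)

noncomputable def K1 (N : ℕ) (θ : ℝ) : ℝ := Complex.normSq (S1 N θ)

lemma S1_continuous (N : ℕ) : Continuous (S1 N) := by
  unfold S1
  exact continuous_finset_sum _ fun k _ => Complex.continuous_exp.comp (by fun_prop)

lemma K1_continuous (N : ℕ) : Continuous (K1 N) :=
  Complex.continuous_normSq.comp (S1_continuous N)

lemma K1_nonneg (N : ℕ) (θ : ℝ) : 0 ≤ K1 N θ := Complex.normSq_nonneg _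

lemma normSq_exp_sub_one (x : ℝ) :
    Complex.normSq (Complex.exp ((x : ℝ) * Complex.I) - 1) = 2 - 2 * Real.cos x := by
  have h1 : (Complex.exp ((x : ℝ) * Complex.I) - 1).re = Real.cos x - 1 := by
    simp [Complex.exp_ofReal_mul_I_re]
  have h2 : (Complex.exp ((x : ℝ) * Complex.I) - 1).im = Real.sin x := by
    simp [Complex.exp_ofReal_mul_I_im]
  rw [Complex.normSq_apply, h1, h2]
  have := Real.sin_sq_add_cos_sq x
  nlinarith

lemma S1_geom (N : ℕ) (θ : ℝ) :
    S1 N θ * (Complex.exp ((2 * π * θ : ℝ) * Complex.I) - 1)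
      = Complex.exp ((2 * π * N * θ : ℝ) * Complex.I) - 1 := by
  have h : ∀ k : ℕ, Complex.exp ((2 * π * k * θ : ℝ) * Complex.I)
      = Complex.exp ((2 * π * θ : ℝ) * Complex.I) ^ k := by
    intro k
    rw [← Complex.exp_nat_mul]
    congr 1
    push_cast
    ring
  rw [show S1 N θ = ∑ k ∈ Finset.range N, Complex.exp ((2 * π * θ : ℝ) * Complex.I) ^ k by
    unfold S1; exact Finset.sum_congr rfl fun k _ => h k]
  rw [geom_sum_mul, ← h N]

lemma K1_tail_bound {N : ℕ} {r θ : ℝ} (hr : 0 < r) (h1 : r ≤ |θ|) (h2 : |θ| ≤ 1/2) :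
    K1 N θ ≤ 1 / (4 * r ^ 2) := by
  have hsin : 2 * r ≤ |Real.sin (π * θ)| := by
    have hnn : Real.sin (π * |θ|) ≥ 0 :=
      Real.sin_nonneg_of_nonneg_of_le_pi (by positivity) (by nlinarith [Real.pi_pos])
    have habs : |Real.sin (π * θ)| = Real.sin (π * |θ|) := by
      rcases le_or_gt 0 θ with hθ | hθ
      · rw [abs_of_nonneg hθ] at *
        exact abs_of_nonneg hnn
      · rw [abs_of_neg hθ] at *
        rw [mul_neg, Real.sin_neg] at hnn ⊢
        rw [abs_of_nonpos (by linarith)]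
    rw [habs]
    have hm := Real.mul_le_sin (x := π * |θ|) (by positivity)
      (by nlinarith [Real.pi_pos])
    have hpi := Real.pi_pos
    have : 2 / π * (π * |θ|) = 2 * |θ| := by field_simp
    rw [this] at hm
    linarith
  have hden : 16 * r ^ 2 ≤ Complex.normSq (Complex.exp ((2 * π * θ : ℝ) * Complex.I) - 1) := by
    rw [normSq_exp_sub_one]
    have hhalf : Real.sin (π * θ) ^ 2 = 1/2 - Real.cos (2 * (π * θ)) / 2 :=
      Real.sin_sq_eq_half_sub _
    rw [show 2 * π * θ = 2 * (π * θ) by ring]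
    have hs : (2 * r) ^ 2 ≤ Real.sin (π * θ) ^ 2 := by
      rw [← sq_abs (Real.sin (π * θ))]
      exact pow_le_pow_left₀ (by positivity) hsin 2
    nlinarith
  have hnum : Complex.normSq (Complex.exp ((2 * π * N * θ : ℝ) * Complex.I) - 1) ≤ 4 := by
    rw [normSq_exp_sub_one]
    nlinarith [Real.neg_one_le_cos (2 * π * N * θ)]
  have hKden : K1 N θ * Complex.normSq (Complex.exp ((2 * π * θ : ℝ) * Complex.I) - 1)
      = Complex.normSq (Complex.exp ((2 * π * N * θ : ℝ) * Complex.I) - 1) := by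
    rw [K1, ← Complex.normSq_mul, S1_geom]
  have hdpos : 0 < Complex.normSq (Complex.exp ((2 * π * θ : ℝ) * Complex.I) - 1) := by
    nlinarith
  have hK : K1 N θ ≤ 4 / (16 * r ^ 2) := by
    rw [le_div_iff₀ (by positivity)]
    calc K1 N θ * (16 * r ^ 2)
        ≤ K1 N θ * Complex.normSq (Complex.exp ((2 * π * θ : ℝ) * Complex.I) - 1) :=
          mul_le_mul_of_nonneg_left hden (K1_nonneg N θ)
      _ ≤ 4 := by rw [hKden]; exact hnum
  calc K1 N θ ≤ 4 / (16 * r ^ 2) := hK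
    _ = 1 / (4 * r ^ 2) := by ring

lemma K1_eq_sum_cos (N : ℕ) (θ : ℝ) :
    K1 N θ = ∑ k ∈ Finset.range N, ∑ l ∈ Finset.range N,
      Real.cos (2 * π * ((k : ℝ) - l) * θ) := by
  have hmc : S1 N θ * (starRingEnd ℂ) (S1 N θ) = (Complex.normSq (S1 N θ) : ℂ) :=
    Complex.mul_conj _
  have hexp : S1 N θ * (starRingEnd ℂ) (S1 N θ)
      = ∑ k ∈ Finset.range N, ∑ l ∈ Finset.range N,
          Complex.exp ((2 * π * ((k : ℝ) - l) * θ : ℝ) * Complex.I) := by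
    unfold S1
    rw [map_sum, Finset.sum_mul_sum]
    refine Finset.sum_congr rfl fun k _ => Finset.sum_congr rfl fun l _ => ?_
    rw [← Complex.exp_conj, ← Complex.exp_add]
    congr 1
    simp only [map_mul, Complex.conj_I, Complex.conj_ofReal]
    push_cast
    ring
  have := hmc.symm.trans hexp
  have hre := congrArg Complex.re this
  rw [Complex.ofReal_re] at hre
  rw [K1, hre, Complex.re_sum]
  refine Finset.sum_congr rfl fun k _ => ?_
  rw [Complex.re_sum]
  refine Finset.sum_congr rfl fun l _ => ?_
  exact Complex.exp_ofReal_mul_I_re _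

lemma integral_cos_int_mul {m : ℝ} (hm : ∃ z : ℤ, m = z) :
    ∫ θ in (-(1/2) : ℝ)..(1/2), Real.cos (2 * π * m * θ) = if m = 0 then 1 else 0 := by
  rcases eq_or_ne m 0 with h0 | h0
  · simp [h0]
    norm_num
  · rw [if_neg h0]
    have hc : (2 * π * m) ≠ 0 := by
      have := Real.pi_pos; rcases hm with ⟨z,rfl⟩; simp_all
    rw [intervalIntegral.integral_comp_mul_left (c := 2 * π * m) Real.cos hc, integral_cos]
    rcases hm with ⟨z, rfl⟩
    have h1 : (2 * π * z * (1/2) : ℝ) = z * π := by ring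
    have h2 : (2 * π * z * (-(1/2)) : ℝ) = -(z * π) := by ring
    rw [h1, h2, Real.sin_neg, Real.sin_int_mul_pi]
    simp
lemma K1_integral_period (N : ℕ) :
    ∫ θ in (-(1/2) : ℝ)..(1/2), K1 N θ = N := by
  have : ∀ θ : ℝ, K1 N θ = ∑ p ∈ Finset.range N ×ˢ Finset.range N,
      Real.cos (2 * π * ((p.1 : ℝ) - p.2) * θ) := by
    intro θ; rw [K1_eq_sum_cos, Finset.sum_product]
  rw [intervalIntegral.integral_congr (fun θ _ => this θ)]
  rw [intervalIntegral.integral_finset_sum (fun p _ => (Continuous.intervalIntegrable (by fun_prop) _ _))]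
  have : ∀ p ∈ Finset.range N ×ˢ Finset.range N,
      (∫ θ in (-(1/2) : ℝ)..(1/2), Real.cos (2 * π * ((p.1 : ℝ) - p.2) * θ))
        = if ((p.1 : ℝ) - p.2) = 0 then 1 else 0 := by
    intro p _
    exact integral_cos_int_mul ⟨(p.1 : ℤ) - p.2, by push_cast; ring⟩
  rw [Finset.sum_congr rfl this]
  rw [Finset.sum_product]
  have : ∀ k ∈ Finset.range N, (∑ l ∈ Finset.range N,
      if ((k : ℝ) - l) = 0 then (1:ℝ) else 0) = 1 := by
    intro k hk
    have : ∀ l ∈ Finset.range N, (if ((k : ℝ) - l) = 0 then (1:ℝ) else 0)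
        = if k = l then (1:ℝ) else 0 := by
      intro l _
      congr 1
      simp only [sub_eq_zero, Nat.cast_inj, eq_iff_iff]
    rw [Finset.sum_congr rfl this, Finset.sum_ite_eq (Finset.range N) k fun _ => (1:ℝ),
      if_pos hk]
  rw [Finset.sum_congr rfl this, Finset.sum_const, Finset.card_range]
  simp
lemma K1_integral_Icc_lower {N : ℕ} {r : ℝ} (hr : 0 < r) (hr2 : r ≤ 1/2) :
    (N : ℝ) - 1/(2 * r^2) ≤ ∫ θ in Set.Icc (-r) r, K1 N θ := by
  have hint : ∀ a b : ℝ, IntervalIntegrable (K1 N) volume a b :=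
    fun a b => (K1_continuous N).intervalIntegrable a b
  have h1 : (∫ θ in (-(1/2) : ℝ)..(-r), K1 N θ) + (∫ θ in (-r : ℝ)..r, K1 N θ)
      + (∫ θ in (r:ℝ)..(1/2), K1 N θ) = ∫ θ in (-(1/2) : ℝ)..(1/2), K1 N θ := by
    rw [intervalIntegral.integral_add_adjacent_intervals (hint _ _) (hint _ _),
      intervalIntegral.integral_add_adjacent_intervals (hint _ _) (hint _ _)]
  have hC : (0:ℝ) < 1 / (4 * r ^ 2) := by positivity
  have htail1 : ∫ θ in (-(1/2) : ℝ)..(-r), K1 N θ ≤ 1 / (4 * r ^ 2) := by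
    have := intervalIntegral.integral_mono_on (by linarith : (-(1/2):ℝ) ≤ -r) (hint _ _)
      (intervalIntegrable_const) (fun θ hθ => K1_tail_bound hr
        (by rw [abs_of_nonpos (by rcases hθ with ⟨_,h⟩; linarith)]; rcases hθ with ⟨_,h⟩; linarith)
        (by rw [abs_of_nonpos (by rcases hθ with ⟨_,h⟩; linarith)]; rcases hθ with ⟨h,_⟩; linarith))
    rw [intervalIntegral.integral_const, smul_eq_mul] at this
    nlinarith
  have htail2 : ∫ θ in (r:ℝ)..(1/2), K1 N θ ≤ 1 / (4 * r ^ 2) := by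
    have := intervalIntegral.integral_mono_on (by linarith : (r:ℝ) ≤ 1/2) (hint _ _)
      (intervalIntegrable_const) (fun θ hθ => K1_tail_bound hr
        (by rw [abs_of_nonneg (by rcases hθ with ⟨h,_⟩; linarith)]; rcases hθ with ⟨h,_⟩; linarith)
        (by rw [abs_of_nonneg (by rcases hθ with ⟨h,_⟩; linarith)]; rcases hθ with ⟨_,h⟩; linarith))
    rw [intervalIntegral.integral_const, smul_eq_mul] at this
    nlinarith
  have hmid : (N : ℝ) - 1/(2 * r^2) ≤ ∫ θ in (-r : ℝ)..r, K1 N θ := by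
    have hP := K1_integral_period N
    have : (1 / (4 * r ^ 2)) + (1 / (4 * r ^ 2)) = 1/(2*r^2) := by
      rw [← add_div]
      ring_nf
    nlinarith [h1, htail1, htail2]
  calc (N : ℝ) - 1/(2 * r^2) ≤ ∫ θ in (-r : ℝ)..r, K1 N θ := hmid
    _ = ∫ θ in Set.Ioc (-r) r, K1 N θ := intervalIntegral.integral_of_le (by linarith)
    _ = ∫ θ in Set.Icc (-r) r, K1 N θ := (integral_Icc_eq_integral_Ioc).symm


open Classical MeasureTheory Filter
open scoped FourierTransform RealInnerProductSpace ENNReal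

set_option maxHeartbeats 2000000 in
/-- Euclidean linear programming bound, lattice case: if `h(x) ≤ f(|x|²)` for `x ≠ 0` and `h`
is the Fourier transform of a nonnegative continuous `g ∈ L¹(ℝⁿ)`, then for any full-rank
lattice `Λ ⊆ ℝⁿ` of covolume `1/δ`, `∑_{x ∈ Λ, x ≠ 0} f(|x|²) ≥ δ · liminf_{t→0} g(t) − h(0)`. -/
theorem stmt_18 (n : ℕ) (f : ℝ → ℝ) (hf : ∀ x : ℝ, 0 < x → 0 ≤ f x)
    (g h : EuclideanSpace ℝ (Fin n) → ℝ)
    (hg_cont : Continuous g) (hg_int : Integrable g) (hg_nonneg : ∀ t, 0 ≤ g t)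
    (hfour : ∀ x, (h x : ℂ) = 𝓕 (fun t => (g t : ℂ)) (-x))
    (hbound : ∀ x : EuclideanSpace ℝ (Fin n), x ≠ 0 → h x ≤ f (‖x‖ ^ 2))
    (Λ : Submodule ℤ (EuclideanSpace ℝ (Fin n))) [DiscreteTopology Λ] [IsZLattice ℝ Λ]
    (δ : ℝ) (hδ : ZLattice.covolume Λ = 1 / δ) :
    ENNReal.ofReal (δ * liminf g (nhds 0) - h 0) ≤
      ∑' x : Λ, ENNReal.ofReal
        (if (x : EuclideanSpace ℝ (Fin n)) ≠ 0
          then f (‖(x : EuclideanSpace ℝ (Fin n))‖ ^ 2) else 0) := by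
  classical
  set P : ℝ≥0∞ := ∑' x : Λ, ENNReal.ofReal
      (if (x : EuclideanSpace ℝ (Fin n)) ≠ 0
        then f (‖(x : EuclideanSpace ℝ (Fin n))‖ ^ 2) else 0) with hPdef
  by_cases hP : P = ⊤
  · rw [hP]; exact le_top
  have δpos : 0 < δ := by
    have h1 : 0 < ZLattice.covolume Λ := ZLattice.covolume_pos Λ volume
    rw [hδ] at h1
    exact one_div_pos.mp h1
  have hliminf : liminf g (nhds 0) = g 0 := (hg_cont.tendsto 0).liminf_eq
  rw [hliminf]
  refine ENNReal.ofReal_le_of_le_toReal ?_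
  set T := P.toReal with hTdef
  have hTnn : 0 ≤ T := ENNReal.toReal_nonneg
  -- Fourier formula for h
  have hfour' : ∀ x : EuclideanSpace ℝ (Fin n),
      (h x : ℂ) = ∫ v, Complex.exp ((2 * Real.pi * ⟪v, x⟫ : ℝ) * Complex.I) * (g v : ℂ) := by
    intro x
    rw [hfour x, Real.fourier_eq']
    congr 1
    funext v
    rw [smul_eq_mul]
    congr 2
    rw [inner_neg_right]
    push_cast
    ring
  have hh0 : h 0 = ∫ v, g v := by
    have := hfour' 0
    simp only [inner_zero_right, mul_zero, Complex.ofReal_zero, zero_mul, Complex.exp_zero,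
      one_mul] at this
    rw [integral_complex_ofReal] at this
    exact_mod_cast this
  have hh0nn : 0 ≤ h 0 := by rw [hh0]; exact integral_nonneg hg_nonneg
  -- basis of the lattice
  have hcard : Fintype.card (Module.Free.ChooseBasisIndex ℤ Λ) = n := by
    rw [← Module.finrank_eq_card_chooseBasisIndex, ZLattice.rank ℝ Λ, finrank_euclideanSpace_fin]
  set bZ : Module.Basis (Fin n) ℤ Λ :=
    (Module.Free.chooseBasis ℤ Λ).reindex (Fintype.equivFinOfCardEq hcard) with hbZdef
  set bR : Module.Basis (Fin n) ℝ (EuclideanSpace ℝ (Fin n)) := Module.Basis.ofZLatticeBasis ℝ Λ bZ with hbRdef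
  have hbRZ : ∀ i, bR i = (bZ i : EuclideanSpace ℝ (Fin n)) := fun i =>
    Module.Basis.ofZLatticeBasis_apply ℝ Λ bZ i
  -- the comparison linear map
  set L : EuclideanSpace ℝ (Fin n) →ₗ[ℝ] EuclideanSpace ℝ (Fin n) :=
    { toFun := fun v => WithLp.toLp 2 (fun i => ⟪bR i, v⟫)
      map_add' := by intro v w; ext i; simp [inner_add_right]
      map_smul' := by intro c v; ext i; simp [inner_smul_right] } with hLdef
  have hLapp : ∀ v i, L v i = ⟪bR i, v⟫ := fun v i => rfl
  have hLinj : Function.Injective L := by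
    have hker : ∀ v, L v = 0 → v = 0 := by
      intro v hv
      have hall : ∀ i, ⟪bR i, v⟫ = 0 := by
        intro i
        have := congrArg (fun w => w i) hv
        simpa [hLapp] using this
      have hv0 : ⟪(∑ i, bR.repr v i • bR i : EuclideanSpace ℝ (Fin n)), v⟫ = 0 := by
        rw [sum_inner]
        refine Finset.sum_eq_zero fun i _ => ?_
        rw [real_inner_smul_left, hall i, mul_zero]
      rw [bR.sum_repr v] at hv0
      exact inner_self_eq_zero.mp hv0
    intro u w huw
    have h1 : L (u - w) = 0 := by rw [map_sub, huw, sub_self]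
    exact sub_eq_zero.mp (hker _ h1)
    
  have hLbij : Function.Bijective L := ⟨hLinj, LinearMap.injective_iff_surjective.mp hLinj⟩
  have hLdet_abs : |LinearMap.det L| = 1 / δ := by
    set b₀ : Module.Basis (Fin n) ℝ (EuclideanSpace ℝ (Fin n)) :=
      (EuclideanSpace.basisFun (Fin n) ℝ).toBasis with hb₀def
    have hb₀app : ∀ j, b₀ j = EuclideanSpace.single j 1 := by
      intro j
      rw [hb₀def, OrthonormalBasis.coe_toBasis, EuclideanSpace.basisFun_apply]
    have hb₀repr : ∀ (x : EuclideanSpace ℝ (Fin n)) i, b₀.repr x i = x i := by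
      intro x i
      rw [hb₀def, OrthonormalBasis.coe_toBasis_repr_apply, EuclideanSpace.basisFun_repr]
    have hcov := ZLattice.covolume_eq_det_mul_measureReal Λ volume bZ b₀
    have hvol1 : volume (ZSpan.fundamentalDomain b₀) = 1 := by
      have hset : ZSpan.fundamentalDomain b₀ =
          ((MeasurableEquiv.toLp 2 (Fin n → ℝ)).symm) ⁻¹'
            (Set.univ.pi fun _ : Fin n => Set.Ico (0:ℝ) 1) := by
        ext x
        simp only [ZSpan.fundamentalDomain, Set.mem_setOf_eq, Set.mem_preimage, Set.mem_pi,
          Set.mem_univ, true_implies]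
        constructor
        · intro hx i
          have := hx i
          rwa [hb₀repr] at this
        · intro hx i
          rw [hb₀repr]
          exact hx i
      rw [hset, (EuclideanSpace.volume_preserving_symm_measurableEquiv_toLp (Fin n)).measure_preimage
        (MeasurableSet.univ_pi (fun _ => measurableSet_Ico)).nullMeasurableSet]
      rw [volume_pi_pi]
      simp [Real.volume_Ico]
    have hdetM : LinearMap.det L = (b₀.toMatrix (((↑) : Λ → EuclideanSpace ℝ (Fin n)) ∘ bZ)).det := by
      rw [← LinearMap.det_toMatrix b₀ L, ← Matrix.det_transpose]
      congr 1
      ext i j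
      rw [Matrix.transpose_apply, LinearMap.toMatrix_apply, Module.Basis.toMatrix_apply]
      rw [hb₀repr, hb₀repr, hLapp, hb₀app]
      rw [EuclideanSpace.inner_single_right]
      simp only [RCLike.star_def, conj_trivial, one_mul]
      rw [Function.comp_apply, ← hbRZ]
    rw [hδ, measureReal_def, hvol1] at hcov
    simp only [ENNReal.toReal_one, mul_one] at hcov
    rw [hdetM, ← Module.Basis.det_apply, ← hcov]
  have hLdet_ne : LinearMap.det L ≠ 0 := by
    intro h0'
    rw [h0', abs_zero] at hLdet_abs
    exact absurd hLdet_abs.symm (by positivity)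
  -- change of variables
  have hCoV : ∀ ψ : EuclideanSpace ℝ (Fin n) → ℝ, Integrable ψ →
      Integrable (fun v => ψ (L v)) ∧ (∫ v, ψ (L v)) = δ * ∫ θ, ψ θ := by
    have hmap : Measure.map L volume = ENNReal.ofReal |(LinearMap.det L)⁻¹| • volume :=
      Measure.map_linearMap_addHaar_eq_smul_addHaar volume hLdet_ne
    have habs : |(LinearMap.det L)⁻¹| = δ := by
      rw [abs_inv, hLdet_abs]
      rw [one_div, inv_inv]
    rw [habs] at hmap
    set me : EuclideanSpace ℝ (Fin n) ≃ᵐ EuclideanSpace ℝ (Fin n) :=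
      ((LinearEquiv.ofBijective L hLbij).toContinuousLinearEquiv.toHomeomorph).toMeasurableEquiv
      with hmedef
    have hcoe : (me : EuclideanSpace ℝ (Fin n) → EuclideanSpace ℝ (Fin n)) = L := rfl
    intro ψ hψ
    constructor
    · have h1 : Integrable ψ (Measure.map me volume) := by
        rw [hcoe, hmap]
        exact hψ.smul_measure ENNReal.ofReal_ne_top
      have := (integrable_map_equiv me ψ).mp h1
      exact this
    · have h1 : ∫ y, ψ y ∂(Measure.map me volume) = ∫ v, ψ (me v) := integral_map_equiv me ψ
      rw [hcoe, hmap, integral_smul_measure, ENNReal.toReal_ofReal δpos.le,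
        smul_eq_mul] at h1
      exact h1.symm
  -- injectivity of the grid embedding
  set emb : (Fin n → ℕ) → EuclideanSpace ℝ (Fin n) :=
    fun a => ∑ i, (a i : ℝ) • bR i with hembdef
  set embΛ : (Fin n → ℕ) → Λ := fun a => ∑ i, (a i : ℤ) • bZ i with hembΛdef
  have hembΛcoe : ∀ a, ((embΛ a : Λ) : EuclideanSpace ℝ (Fin n)) = emb a := by
    intro a
    rw [hembΛdef, hembdef]
    simp only [Submodule.coe_sum, Submodule.coe_smul, zsmul_eq_mul]
    refine Finset.sum_congr rfl fun i _ => ?_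
    rw [hbRZ i]
    exact (Nat.cast_smul_eq_nsmul ℝ _ _).symm
  have hembinj : Function.Injective emb := by
    intro a c hac
    have h2 : ∀ j, ((a j : ℝ)) = ((c j : ℝ)) := by
      intro j
      have := congrArg (fun w => (bR.repr w) j) hac
      simpa [hembdef, map_sum, _root_.map_smul, Module.Basis.repr_self, Finsupp.single_apply] using this
    funext j
    exact_mod_cast h2 j
  -- the exponential sums
  set S : ℕ → EuclideanSpace ℝ (Fin n) → ℂ := fun N v =>
    ∑ a ∈ Fintype.piFinset (fun _ : Fin n => Finset.range N),
      Complex.exp ((2 * Real.pi * ⟪v, emb a⟫ : ℝ) * Complex.I) with hSdef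
  have hinner_emb : ∀ (v : EuclideanSpace ℝ (Fin n)) a,
      ⟪v, emb a⟫ = ∑ i, (a i : ℝ) * ⟪bR i, v⟫ := by
    intro v a
    rw [hembdef]
    rw [inner_sum]
    refine Finset.sum_congr rfl fun i _ => ?_
    rw [real_inner_smul_right, real_inner_comm]
  have hSprod : ∀ N v, Complex.normSq (S N v) = ∏ i, K1 N ⟪bR i, v⟫ := by
    intro N v
    have hS : S N v = ∏ i, S1 N ⟪bR i, v⟫ := by
      simp only [hSdef]
      have hterm : ∀ a ∈ Fintype.piFinset (fun _ : Fin n => Finset.range N),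
          Complex.exp ((2 * Real.pi * ⟪v, emb a⟫ : ℝ) * Complex.I)
            = ∏ i, Complex.exp ((2 * Real.pi * (a i : ℝ) * ⟪bR i, v⟫ : ℝ) * Complex.I) := by
        intro a _
        rw [← Complex.exp_sum]
        congr 1
        rw [← Finset.sum_mul, ← Complex.ofReal_sum]
        congr 2
        rw [hinner_emb v a, Finset.mul_sum]
        exact Finset.sum_congr rfl fun i _ => by ring
      rw [Finset.sum_congr rfl hterm]
      rw [← Finset.prod_univ_sum (fun _ : Fin n => Finset.range N)
        (fun i k => Complex.exp ((2 * Real.pi * (k : ℝ) * ⟪bR i, v⟫ : ℝ) * Complex.I))]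
      rfl
    rw [hS, map_prod]
    rfl
  have hexp_int : ∀ x : EuclideanSpace ℝ (Fin n),
      Integrable (fun v => Complex.exp ((2 * Real.pi * ⟪v, x⟫ : ℝ) * Complex.I) * (g v : ℂ)) := by
    intro x
    refine (hg_int.ofReal (𝕜 := ℂ)).bdd_mul (c := 1) ?_ (ae_of_all _ fun v => ?_)
    · refine Continuous.aestronglyMeasurable ?_
      refine Complex.continuous_exp.comp ?_
      refine Continuous.mul ?_ continuous_const
      exact Complex.continuous_ofReal.comp
        (continuous_const.mul (continuous_id.inner continuous_const))
    · rw [Complex.norm_exp_ofReal_mul_I]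
  have hS_cont : ∀ N, Continuous (S N) := by
    intro N
    rw [hSdef]
    refine continuous_finset_sum _ fun a _ => Complex.continuous_exp.comp ?_
    exact Continuous.mul (Complex.continuous_ofReal.comp
      (continuous_const.mul (continuous_id.inner continuous_const))) continuous_const
  have hSg_int : ∀ N, Integrable (fun v => Complex.normSq (S N v) * g v) := by
    intro N
    set G := Fintype.piFinset (fun _ : Fin n => Finset.range N) with hG
    refine hg_int.bdd_mul (c := ((G.card : ℝ))^2) ?_ (ae_of_all _ fun v => ?_)
    · exact (Complex.continuous_normSq.comp (hS_cont N)).aestronglyMeasurable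
    · have h1 : ‖S N v‖ ≤ (G.card : ℝ) := by
        rw [hSdef]
        refine (norm_sum_le _ _).trans ?_
        rw [Finset.sum_congr rfl (fun a _ => Complex.norm_exp_ofReal_mul_I _)]
        rw [Finset.sum_const, nsmul_eq_mul, mul_one]
      have h2 : Complex.normSq (S N v) = ‖S N v‖^2 := by
        rw [Complex.normSq_eq_norm_sq]
      rw [Real.norm_eq_abs, abs_of_nonneg (Complex.normSq_nonneg _), h2]
      exact pow_le_pow_left₀ (norm_nonneg _) h1 2
  -- the summation identity
  have hId : ∀ N : ℕ,
      ∑ p ∈ (Fintype.piFinset (fun _ : Fin n => Finset.range N)) ×ˢ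
          (Fintype.piFinset (fun _ : Fin n => Finset.range N)),
        h (emb p.1 - emb p.2) = ∫ v, Complex.normSq (S N v) * g v := by
    intro N
    set G := Fintype.piFinset (fun _ : Fin n => Finset.range N) with hG
    have hpt : ∀ v, ∑ p ∈ G ×ˢ G,
        Complex.exp ((2 * Real.pi * ⟪v, emb p.1 - emb p.2⟫ : ℝ) * Complex.I) * (g v : ℂ)
          = (Complex.normSq (S N v) : ℂ) * (g v : ℂ) := by
      intro v
      rw [← Finset.sum_mul]
      congr 1
      have hconj : S N v * (starRingEnd ℂ) (S N v)
          = ∑ a ∈ G, ∑ b ∈ G,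
              Complex.exp ((2 * Real.pi * ⟪v, emb a - emb b⟫ : ℝ) * Complex.I) := by
        simp only [hSdef]
        rw [map_sum, Finset.sum_mul_sum]
        refine Finset.sum_congr rfl fun a _ => Finset.sum_congr rfl fun b _ => ?_
        rw [← Complex.exp_conj, ← Complex.exp_add]
        congr 1
        simp only [map_mul, Complex.conj_I, Complex.conj_ofReal]
        rw [inner_sub_right]
        push_cast
        ring
      rw [Finset.sum_product, ← hconj, Complex.mul_conj]
    have hC : ((∑ p ∈ G ×ˢ G, h (emb p.1 - emb p.2) : ℝ) : ℂ)
        = ((∫ v, Complex.normSq (S N v) * g v : ℝ) : ℂ) := by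
      push_cast
      calc ∑ p ∈ G ×ˢ G, (h (emb p.1 - emb p.2) : ℂ)
          = ∑ p ∈ G ×ˢ G, ∫ v, Complex.exp
              ((2 * Real.pi * ⟪v, emb p.1 - emb p.2⟫ : ℝ) * Complex.I) * (g v : ℂ) :=
            Finset.sum_congr rfl fun p _ => hfour' _
        _ = ∫ v, ∑ p ∈ G ×ˢ G, Complex.exp
              ((2 * Real.pi * ⟪v, emb p.1 - emb p.2⟫ : ℝ) * Complex.I) * (g v : ℂ) :=
            (integral_finset_sum _ (fun p _ => hexp_int _)).symm
        _ = ∫ v, (Complex.normSq (S N v) : ℂ) * (g v : ℂ) := by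
            exact congrArg _ (funext hpt)
        _ = ((∫ v, Complex.normSq (S N v) * g v : ℝ) : ℂ) := by
            rw [← integral_complex_ofReal]
            push_cast
            rfl
    exact_mod_cast hC
  -- upper bound
  have hup : ∀ N : ℕ,
      ∑ p ∈ (Fintype.piFinset (fun _ : Fin n => Finset.range N)) ×ˢ
          (Fintype.piFinset (fun _ : Fin n => Finset.range N)),
        h (emb p.1 - emb p.2) ≤ ((N : ℝ)) ^ n * (h 0 + T) := by
    intro N
    set G := Fintype.piFinset (fun _ : Fin n => Finset.range N) with hG
    have hcardG : (G.card : ℝ) = (N : ℝ) ^ n := by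
      rw [hG, Fintype.card_piFinset]
      push_cast [Finset.card_range]
      rw [Finset.prod_const, Finset.card_univ, Fintype.card_fin]
    have hrow : ∀ b ∈ G, ∑ a ∈ G, h (emb a - emb b) ≤ h 0 + T := by
      intro b hb
      have hsplit : ∑ a ∈ G.erase b, h (emb a - emb b) + h (emb b - emb b)
          = ∑ a ∈ G, h (emb a - emb b) := Finset.sum_erase_add G _ hb
      have hbb : h (emb b - emb b) = h 0 := by rw [sub_self]
      have hrow2 : ∑ a ∈ G.erase b, h (emb a - emb b) ≤ T := by
        have hne : ∀ a ∈ G.erase b, emb a - emb b ≠ 0 := by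
          intro a ha h0'
          exact (Finset.ne_of_mem_erase ha) (hembinj (sub_eq_zero.mp h0'))
        have hstep1 : ∑ a ∈ G.erase b, h (emb a - emb b)
            ≤ ∑ a ∈ G.erase b, f (‖emb a - emb b‖^2) :=
          Finset.sum_le_sum fun a ha => hbound _ (hne a ha)
        set Jmap : (Fin n → ℕ) → Λ := fun a => embΛ a - embΛ b with hJmapdef
        have hJcoe : ∀ a, ((Jmap a : Λ) : EuclideanSpace ℝ (Fin n)) = emb a - emb b := by
          intro a
          rw [hJmapdef]
          push_cast [hembΛcoe]
          rfl
        have hJinj : Set.InjOn Jmap (G.erase b) := by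
          intro a _ c _ hac
          apply hembinj
          have h1 := congrArg (fun z : Λ => (z : EuclideanSpace ℝ (Fin n))) hac
          simp only [hJcoe] at h1
          exact sub_left_injective h1
        have hstep2 : ∑ a ∈ G.erase b, f (‖emb a - emb b‖^2)
            = ∑ z ∈ (G.erase b).image Jmap,
                (if (z : EuclideanSpace ℝ (Fin n)) ≠ 0
                  then f (‖(z : EuclideanSpace ℝ (Fin n))‖ ^ 2) else 0) := by
          rw [Finset.sum_image hJinj]
          refine Finset.sum_congr rfl fun a ha => ?_
          rw [hJcoe, if_pos (hne a ha)]
        have hstep3 : ∑ z ∈ (G.erase b).image Jmap,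
            (if (z : EuclideanSpace ℝ (Fin n)) ≠ 0
              then f (‖(z : EuclideanSpace ℝ (Fin n))‖ ^ 2) else 0) ≤ T := by
          set J := (G.erase b).image Jmap with hJ
          have hψnn : ∀ z : Λ, 0 ≤ (if (z : EuclideanSpace ℝ (Fin n)) ≠ 0
              then f (‖(z : EuclideanSpace ℝ (Fin n))‖ ^ 2) else 0) := by
            intro z
            by_cases hz : (z : EuclideanSpace ℝ (Fin n)) ≠ 0
            · rw [if_pos hz]
              exact hf _ (pow_pos (norm_pos_iff.mpr hz) 2)
            · rw [if_neg hz]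
          have h1 : ∑ z ∈ J, ENNReal.ofReal (if (z : EuclideanSpace ℝ (Fin n)) ≠ 0
              then f (‖(z : EuclideanSpace ℝ (Fin n))‖ ^ 2) else 0) ≤ P :=
            hPdef ▸ ENNReal.sum_le_tsum J
          have h2 : ∑ z ∈ J, (if (z : EuclideanSpace ℝ (Fin n)) ≠ 0
              then f (‖(z : EuclideanSpace ℝ (Fin n))‖ ^ 2) else 0)
              = (∑ z ∈ J, ENNReal.ofReal (if (z : EuclideanSpace ℝ (Fin n)) ≠ 0
                  then f (‖(z : EuclideanSpace ℝ (Fin n))‖ ^ 2) else 0)).toReal := by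
            rw [ENNReal.toReal_sum (fun z _ => ENNReal.ofReal_ne_top)]
            exact (Finset.sum_congr rfl fun z _ =>
              ENNReal.toReal_ofReal (hψnn z)).symm
          rw [h2, hTdef]
          exact ENNReal.toReal_mono hP h1
        calc ∑ a ∈ G.erase b, h (emb a - emb b)
            ≤ ∑ a ∈ G.erase b, f (‖emb a - emb b‖^2) := hstep1
          _ ≤ T := hstep2 ▸ hstep3
      linarith [hsplit, hrow2, hbb]
    calc ∑ p ∈ G ×ˢ G, h (emb p.1 - emb p.2)
        = ∑ a ∈ G, ∑ b ∈ G, h (emb a - emb b) := Finset.sum_product _ _ _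
      _ = ∑ b ∈ G, ∑ a ∈ G, h (emb a - emb b) := Finset.sum_comm
      _ ≤ ∑ b ∈ G, (h 0 + T) := Finset.sum_le_sum hrow
      _ = (G.card : ℝ) * (h 0 + T) := by rw [Finset.sum_const, nsmul_eq_mul]
      _ = ((N : ℝ)) ^ n * (h 0 + T) := by rw [hcardG]
  -- key inequality for every ε > 0
  have key : ∀ ε : ℝ, 0 < ε → δ * (g 0 - ε) ≤ h 0 + T := by
    intro ε hε
    rcases le_or_gt (g 0 - ε) 0 with hneg | hpos
    · have h1 : δ * (g 0 - ε) ≤ 0 := mul_nonpos_of_nonneg_of_nonpos δpos.le hneg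
      linarith
    -- box radius from continuity of g at 0
    obtain ⟨r, hr0, hr2, hbox⟩ : ∃ r : ℝ, 0 < r ∧ r ≤ 1/2 ∧
        ∀ v : EuclideanSpace ℝ (Fin n), (∀ i, |⟪bR i, v⟫| ≤ r) → g 0 - ε ≤ g v := by
      have hcont0 : ContinuousAt g 0 := hg_cont.continuousAt
      rw [Metric.continuousAt_iff] at hcont0
      obtain ⟨η, hη0, hη⟩ := hcont0 ε hε
      set Lsymm : EuclideanSpace ℝ (Fin n) →L[ℝ] EuclideanSpace ℝ (Fin n) :=
        LinearMap.toContinuousLinearMap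
          ((LinearEquiv.ofBijective L hLbij).symm.toLinearMap) with hLsdef
      set c := ‖Lsymm‖ with hcdef
      have hc0 : 0 ≤ c := norm_nonneg _
      set r : ℝ := min (1/2) (η / ((c + 1) * (Real.sqrt n + 1))) with hrdef
      have hr0 : 0 < r := by
        refine lt_min (by norm_num) ?_
        have hd : 0 < (c + 1) * (Real.sqrt n + 1) := by positivity
        positivity
      refine ⟨r, hr0, min_le_left _ _, ?_⟩
      intro v hv
      have hLv : ‖L v‖ ≤ Real.sqrt n * r := by
        have hsum : ∑ i, ‖L v i‖ ^ 2 ≤ (n : ℝ) * r ^ 2 := by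
          calc ∑ i, ‖L v i‖ ^ 2 ≤ ∑ _i : Fin n, r ^ 2 := by
                refine Finset.sum_le_sum fun i _ => ?_
                have := hv i
                rw [hLapp]
                rw [Real.norm_eq_abs]
                exact pow_le_pow_left₀ (abs_nonneg _) (hLapp v i ▸ this) 2
            _ = (n : ℝ) * r ^ 2 := by
                rw [Finset.sum_const, Finset.card_univ, Fintype.card_fin, nsmul_eq_mul]
        rw [EuclideanSpace.norm_eq]
        calc Real.sqrt (∑ i, ‖L v i‖ ^ 2) ≤ Real.sqrt ((n : ℝ) * r ^ 2) :=
              Real.sqrt_le_sqrt hsum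
          _ = Real.sqrt n * r := by
              rw [Real.sqrt_mul (Nat.cast_nonneg n), Real.sqrt_sq hr0.le]
      have hvL : v = Lsymm (L v) := by
        have := (LinearEquiv.ofBijective L hLbij).symm_apply_apply v
        simpa [hLsdef] using this.symm
      have hsmall : dist v 0 < η := by
        rw [dist_zero_right]
        have h1 : ‖v‖ ≤ c * ‖L v‖ := by
          conv_lhs => rw [hvL]
          exact Lsymm.le_opNorm _
        have h2 : c * ‖L v‖ ≤ c * (Real.sqrt n * r) :=
          mul_le_mul_of_nonneg_left hLv hc0
        have h3 : r ≤ η / ((c + 1) * (Real.sqrt n + 1)) := min_le_right _ _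
        have hs0 : 0 ≤ Real.sqrt n := Real.sqrt_nonneg _
        have hd : 0 < (c + 1) * (Real.sqrt n + 1) := by positivity
        have h4 : c * (Real.sqrt n * r) < η := by
          have h5 : c * Real.sqrt n * r ≤ c * Real.sqrt n * (η / ((c + 1) * (Real.sqrt n + 1))) :=
            mul_le_mul_of_nonneg_left h3 (by positivity)
          have h6 : c * Real.sqrt n * (η / ((c + 1) * (Real.sqrt n + 1))) < η := by
            rw [mul_div_assoc']
            rw [div_lt_iff₀ hd]
            nlinarith
          nlinarith
        linarith
      have := hη hsmall
      rw [Real.dist_eq] at this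
      have := abs_lt.mp this
      linarith
    set C := 1/(2*r^2) with hCdef
    have hCpos : 0 < C := by positivity
    -- main estimate
    have hmain : ∀ N : ℕ, C ≤ (N:ℝ) →
        (g 0 - ε) * (δ * ((N:ℝ) - C)^n) ≤ ((N:ℝ))^n * (h 0 + T) := by
      intro N hN
      set Kr : ℝ → ℝ := Set.indicator (Set.Icc (-r) r) (K1 N) with hKrdef
      have hKr_int : Integrable Kr :=
        ((K1_continuous N).integrableOn_Icc).integrable_indicator measurableSet_Icc
      have hKr_nonneg : ∀ θ, 0 ≤ Kr θ :=
        fun θ => Set.indicator_nonneg (fun x _ => K1_nonneg N x) θ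
      have hIKr : (N:ℝ) - C ≤ ∫ θ, Kr θ := by
        rw [hKrdef, integral_indicator measurableSet_Icc]
        exact K1_integral_Icc_lower hr0 hr2
      set Ψ : EuclideanSpace ℝ (Fin n) → ℝ := fun θ => ∏ i, Kr (θ i) with hΨdef
      have hpi_int : Integrable (fun x : Fin n → ℝ => ∏ i, Kr (x i)) :=
        Integrable.fintype_prod (f := fun _ : Fin n => Kr) (fun i => hKr_int)
      have hΨ_int : Integrable Ψ := by
        have h1 : Integrable (fun x : Fin n → ℝ => ∏ i, Kr (x i))
            (Measure.map ((MeasurableEquiv.toLp 2 (Fin n → ℝ)).symm) volume) := by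
          rw [(EuclideanSpace.volume_preserving_symm_measurableEquiv_toLp (Fin n)).map_eq]
          exact hpi_int
        exact (integrable_map_equiv ((MeasurableEquiv.toLp 2 (Fin n → ℝ)).symm)
          (fun x : Fin n → ℝ => ∏ i, Kr (x i))).mp h1
      have hΨ_val : ∫ θ, Ψ θ = (∫ θ : ℝ, Kr θ)^n := by
        have h1 := (EuclideanSpace.volume_preserving_symm_measurableEquiv_toLp (Fin n)).integral_comp'
          (f := (MeasurableEquiv.toLp 2 (Fin n → ℝ)).symm)
          (fun x : Fin n → ℝ => ∏ i, Kr (x i))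
        rw [MeasureTheory.integral_fintype_prod_volume_eq_pow (ι := Fin n) Kr, Fintype.card_fin] at h1
        exact h1
      obtain ⟨hcomp_int, hcomp_val⟩ := hCoV Ψ hΨ_int
      have hpt : ∀ v, (g 0 - ε) * Ψ (L v) ≤ Complex.normSq (S N v) * g v := by
        intro v
        rcases Classical.em (∀ i, |⟪bR i, v⟫| ≤ r) with hin | hout
        · have hΨL : Ψ (L v) = ∏ i, K1 N ⟪bR i, v⟫ := by
            simp only [hΨdef]
            refine Finset.prod_congr rfl fun i _ => ?_
            rw [hLapp]
            exact Set.indicator_of_mem (Set.mem_Icc.mpr (abs_le.mp (hin i))) _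
          have hprod_nn : 0 ≤ ∏ i, K1 N ⟪bR i, v⟫ :=
            Finset.prod_nonneg fun i _ => K1_nonneg _ _
          rw [hΨL, ← hSprod N v]
          have hgv := hbox v hin
          nlinarith [Complex.normSq_nonneg (S N v)]
        · push_neg at hout
          obtain ⟨i0, hi0⟩ := hout
          have hΨ0 : Ψ (L v) = 0 := by
            simp only [hΨdef]
            refine Finset.prod_eq_zero (Finset.mem_univ i0) ?_
            rw [hLapp]
            refine Set.indicator_of_notMem ?_ _
            intro hmem
            exact absurd (abs_le.mpr (Set.mem_Icc.mp hmem)) (not_le.mpr hi0)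
          rw [hΨ0, mul_zero]
          exact mul_nonneg (Complex.normSq_nonneg _) (hg_nonneg v)
      have hle : ∫ v, (g 0 - ε) * Ψ (L v) ≤ ∫ v, Complex.normSq (S N v) * g v :=
        integral_mono (hcomp_int.const_mul _) (hSg_int N) hpt
      have hval : ∫ v, (g 0 - ε) * Ψ (L v) = (g 0 - ε) * (δ * (∫ θ : ℝ, Kr θ)^n) := by
        rw [integral_const_mul, hcomp_val, hΨ_val]
      have hintub : ∫ v, Complex.normSq (S N v) * g v ≤ ((N:ℝ))^n * (h 0 + T) := by
        rw [← hId N]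
        exact hup N
      have hchain : (g 0 - ε) * (δ * (∫ θ : ℝ, Kr θ)^n) ≤ ((N:ℝ))^n * (h 0 + T) := by
        rw [← hval]
        exact hle.trans hintub
      refine le_trans ?_ hchain
      have h1 : ((N:ℝ) - C)^n ≤ (∫ θ : ℝ, Kr θ)^n :=
        pow_le_pow_left₀ (by linarith) hIKr n
      have h2 : δ * ((N:ℝ) - C)^n ≤ δ * (∫ θ : ℝ, Kr θ)^n :=
        mul_le_mul_of_nonneg_left h1 δpos.le
      exact mul_le_mul_of_nonneg_left h2 hpos.le
    -- pass to the limit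
    have hlim : Tendsto (fun N : ℕ => (g 0 - ε) * (δ * (1 - C/(N:ℝ))^n)) atTop
        (nhds ((g 0 - ε) * (δ * (1 - 0)^n))) := by
      refine Tendsto.const_mul _ (Tendsto.const_mul _ (Tendsto.pow ?_ n))
      exact tendsto_const_nhds.sub (tendsto_const_div_atTop_nhds_zero_nat C)
    have hev : ∀ᶠ N : ℕ in atTop, (g 0 - ε) * (δ * (1 - C/(N:ℝ))^n) ≤ h 0 + T := by
      filter_upwards [eventually_ge_atTop (Nat.ceil C + 1)] with N hN
      have hNpos : 0 < (N:ℝ) := by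
        have : (1:ℕ) ≤ N := le_trans (Nat.le_add_left 1 (Nat.ceil C)) hN
        exact_mod_cast Nat.lt_of_lt_of_le Nat.zero_lt_one this
      have hNC : C ≤ (N:ℝ) := by
        calc C ≤ (Nat.ceil C : ℝ) := Nat.le_ceil C
          _ ≤ (N:ℝ) := by exact_mod_cast le_trans (Nat.le_add_right _ 1) hN
      have hm := hmain N hNC
      have heq : (1 - C/(N:ℝ)) = ((N:ℝ) - C)/(N:ℝ) := by
        field_simp
      rw [heq, div_pow]
      have hNpow : 0 < ((N:ℝ))^n := pow_pos hNpos n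
      rw [mul_div_assoc' δ _ _, ← mul_div_assoc]
      rw [div_le_iff₀ hNpow]
      calc (g 0 - ε) * (δ * ((N:ℝ) - C)^n) ≤ ((N:ℝ))^n * (h 0 + T) := hm
        _ = (h 0 + T) * ((N:ℝ))^n := mul_comm _ _
    have hfin := le_of_tendsto hlim hev
    simp only [sub_zero, one_pow, mul_one] at hfin
    linarith [hfin]
  -- conclusion
  have hfinal : δ * g 0 ≤ h 0 + T := by
    refine le_of_forall_pos_le_add fun c hc => ?_
    have := key (c / δ) (by positivity)
    calc δ * g 0 = δ * (g 0 - c / δ) + c := by field_simp; ring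
      _ ≤ h 0 + T + c := by linarith
  linarith
end
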